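/- arXiv:1911.07576 — 4 statements merged into one kernel-verified Lean document; each statement's English description precedes it below -/
import Mathlib

section
/- If f is a Skolem function with f < 2^{x^x}, then there exists n ∈ ℕ such that f < 2^{n^x}. -/
open Filter

/-- The positive real numbers, the domain/codomain of Skolem functions. -/
abbrev Rpos : Type := {x : ℝ // 0 < x}

/-- `Sk f` asserts that `f` is a Skolem function: `Sk` is the smallest set of functions
from `ℝ^{>0}` to `ℝ^{>0}` containing the constant function `1` and the identity, and closed
under pointwise addition, multiplication and exponentiation. -/
inductive Sk : (Rpos → Rpos) → Prop
  | one : Sk fun _ => ⟨1, one_pos⟩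
  | id : Sk fun x => x
  | add : ∀ {f g : Rpos → Rpos}, Sk f → Sk g →
      Sk fun x => ⟨(f x : ℝ) + (g x : ℝ), add_pos (f x).2 (g x).2⟩
  | mul : ∀ {f g : Rpos → Rpos}, Sk f → Sk g →
      Sk fun x => ⟨(f x : ℝ) * (g x : ℝ), mul_pos (f x).2 (g x).2⟩
  | pow : ∀ {f g : Rpos → Rpos}, Sk f → Sk g →
      Sk fun x => ⟨(f x : ℝ) ^ (g x : ℝ), Real.rpow_pos_of_pos (f x).2 _⟩

/-- `f < g` for Skolem functions: `f x < g x` for all sufficiently large `x`. -/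
def SkLt (f g : Rpos → Rpos) : Prop := ∀ᶠ x in atTop, (f x : ℝ) < (g x : ℝ)

/-- `f ≼ g` : `f` is dominated by `g`, i.e. `f ≤ n·g` eventually, for some `n : ℕ`. -/
def SkPreceq (f g : Rpos → Rpos) : Prop := ∃ n : ℕ, ∀ᶠ x in atTop, (f x : ℝ) ≤ n * (g x : ℝ)

lemma skPreceq_refl (f : Rpos → Rpos) : SkPreceq f f :=
  ⟨1, Filter.Eventually.of_forall fun x => by simp⟩

lemma skPreceq_trans {f g h : Rpos → Rpos} (h1 : SkPreceq f g) (h2 : SkPreceq g h) :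
    SkPreceq f h := by
  obtain ⟨n, hn⟩ := h1
  obtain ⟨m, hm⟩ := h2
  refine ⟨n * m, ?_⟩
  filter_upwards [hn, hm] with x hx1 hx2
  calc (f x : ℝ) ≤ n * (g x : ℝ) := hx1
    _ ≤ n * (m * (h x : ℝ)) := mul_le_mul_of_nonneg_left hx2 (Nat.cast_nonneg n)
    _ = (↑(n * m)) * (h x : ℝ) := by push_cast; ring

/-- The setoid on a set `A` of Skolem functions identifying functions in the same
archimedean class (`f ≍ g` iff `f ≼ g` and `g ≼ f`). -/
def skArchSetoid (A : Set (Rpos → Rpos)) : Setoid A :=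
  ⟨fun a b => SkPreceq a.1 b.1 ∧ SkPreceq b.1 a.1,
   ⟨fun _ => ⟨skPreceq_refl _, skPreceq_refl _⟩,
    fun h => ⟨h.2, h.1⟩,
    fun h1 h2 => ⟨skPreceq_trans h1.1 h2.1, skPreceq_trans h2.2 h1.2⟩⟩⟩

/-- The ordering induced by strict domination `≺` on the set of archimedean classes. -/
def skClassLt (A : Set (Rpos → Rpos)) :
    Quotient (skArchSetoid A) → Quotient (skArchSetoid A) → Prop :=
  fun x y => ∃ a b : A, x = Quotient.mk (skArchSetoid A) a ∧ y = Quotient.mk (skArchSetoid A) b ∧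
    SkPreceq a.1 b.1 ∧ ¬ SkPreceq b.1 a.1


/-- The function `2^{x^x}`. -/
noncomputable def twoXX : Rpos → Rpos :=
  fun x => ⟨(2 : ℝ) ^ ((x : ℝ) ^ (x : ℝ)), Real.rpow_pos_of_pos two_pos _⟩

/-- The function `2^{n^x}`. -/
noncomputable def twoPowNPowX (n : ℕ) : Rpos → Rpos :=
  fun x => ⟨(2 : ℝ) ^ ((n : ℝ) ^ (x : ℝ)), Real.rpow_pos_of_pos two_pos _⟩

lemma evOf {p : Rpos → Prop} (a : ℝ) (h : ∀ x : Rpos, a ≤ (x:ℝ) → p x) :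
    ∀ᶠ x in atTop, p x := by
  rw [eventually_atTop]
  refine ⟨⟨max a 1, lt_of_lt_of_le one_pos (le_max_right _ _)⟩, fun b hb => h b ?_⟩
  calc a ≤ max a 1 := le_max_left _ _
    _ ≤ (b:ℝ) := hb

lemma evR {p : ℝ → Prop} (h : ∀ᶠ y : ℝ in atTop, p y) :
    ∀ᶠ x : Rpos in atTop, p (x:ℝ) := by
  rw [eventually_atTop] at h
  obtain ⟨a, ha⟩ := h
  exact evOf a fun x hx => ha _ hx

lemma ev_le_coe (a : ℝ) : ∀ᶠ x : Rpos in atTop, a ≤ (x:ℝ) := evR (eventually_ge_atTop a)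

lemma ev_rpow_le {s c : ℝ} (hc : 1 < c) : ∀ᶠ x : Rpos in atTop, ((x:ℝ)) ^ s ≤ c ^ (x:ℝ) := by
  have hb : (0:ℝ) < Real.log c := Real.log_pos hc
  have h := (isLittleO_rpow_exp_pos_mul_atTop s hb).bound one_pos
  refine evR (p := fun y => y ^ s ≤ c ^ y) (h.mp (Filter.Eventually.of_forall fun y hy => ?_))
  have h2 : Real.exp (Real.log c * y) = c ^ y := by
    rw [Real.rpow_def_of_pos (lt_trans one_pos hc)]
  calc y ^ s ≤ |y ^ s| := le_abs_self _
    _ ≤ 1 * ‖Real.exp (Real.log c * y)‖ := by rw [← Real.norm_eq_abs]; exact hy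
    _ = Real.exp (Real.log c * y) := by rw [one_mul, Real.norm_eq_abs, abs_of_pos (Real.exp_pos _)]
    _ = c ^ y := h2

lemma sq_rpow (x : Rpos) : ((x:ℝ)) ^ (2:ℝ) = (x:ℝ) * (x:ℝ) := by
  rw [show (2:ℝ) = ((2:ℕ):ℝ) by norm_num, Real.rpow_natCast]
  ring

lemma ev_sq_le : ∀ᶠ x : Rpos in atTop, ((x:ℝ)) * ((x:ℝ)) ≤ (2:ℝ) ^ (x:ℝ) := by
  filter_upwards [ev_rpow_le (s := 2) (c := 2) one_lt_two] with x hx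
  rw [← sq_rpow]; exact hx

lemma ev_id_le : ∀ᶠ x : Rpos in atTop, ((x:ℝ)) ≤ (2:ℝ) ^ (x:ℝ) := by
  filter_upwards [ev_rpow_le (s := 1) (c := 2) one_lt_two] with x hx
  rw [Real.rpow_one] at hx; exact hx

lemma ev_xx_le : ∀ᶠ x : Rpos in atTop, ((x:ℝ)) ^ ((x:ℝ)) ≤ (2:ℝ) ^ ((x:ℝ) * (x:ℝ)) := by
  filter_upwards [ev_id_le] with x hx
  calc ((x:ℝ)) ^ ((x:ℝ)) ≤ ((2:ℝ) ^ ((x:ℝ))) ^ ((x:ℝ)) :=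
        Real.rpow_le_rpow x.2.le hx x.2.le
    _ = (2:ℝ) ^ ((x:ℝ) * (x:ℝ)) := by rw [← Real.rpow_mul (by norm_num)]

/-- base monotonicity of rpow -/
lemma base_mono {c m : ℝ} (hc : 0 ≤ c) (hcm : c ≤ m) (x : Rpos) :
    c ^ ((x:ℝ)) ≤ m ^ ((x:ℝ)) := Real.rpow_le_rpow hc hcm x.2.le

/-- `2 * m^x ≤ (2*m)^x` for `x ≥ 1`, `m ≥ 0`. -/
lemma two_mul_rpow {m : ℝ} (hm : 0 ≤ m) (x : Rpos) (hx : (1:ℝ) ≤ x) :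
    2 * m ^ ((x:ℝ)) ≤ (2 * m) ^ ((x:ℝ)) := by
  have h2 : (2:ℝ) ≤ 2 ^ ((x:ℝ)) := by
    calc (2:ℝ) = 2 ^ (1:ℝ) := (Real.rpow_one 2).symm
      _ ≤ 2 ^ ((x:ℝ)) := Real.rpow_le_rpow_of_exponent_le one_le_two hx
  calc 2 * m ^ ((x:ℝ)) ≤ 2 ^ ((x:ℝ)) * m ^ ((x:ℝ)) :=
        mul_le_mul_of_nonneg_right h2 (Real.rpow_nonneg hm _)
    _ = (2 * m) ^ ((x:ℝ)) := (Real.mul_rpow (by norm_num) hm).symm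

structure Good (f : Rpos → Rpos) : Prop where
  h0 : ∀ᶠ x : Rpos in atTop, (1:ℝ) ≤ (f x : ℝ)
  h1 : (∀ᶠ x : Rpos in atTop, (f x : ℝ) = 1) ∨ (∀ᶠ x : Rpos in atTop, (2:ℝ) ≤ (f x : ℝ))
  h2 : (∃ c : ℝ, 1 ≤ c ∧ ∀ᶠ x : Rpos in atTop, (f x : ℝ) ≤ c) ∨
       (∀ᶠ x : Rpos in atTop, ((x:ℝ)) ≤ (f x : ℝ))
  h3 : (∃ c : ℝ, 1 ≤ c ∧ ∀ᶠ x : Rpos in atTop, (f x : ℝ) ≤ c * (x:ℝ)) ∨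
       (∀ᶠ x : Rpos in atTop, ((x:ℝ)) * ((x:ℝ)) ≤ (f x : ℝ))
  h4 : (∃ c : ℝ, 1 ≤ c ∧ ∀ᶠ x : Rpos in atTop, (f x : ℝ) ≤ c ^ ((x:ℝ))) ∨
       (∀ᶠ x : Rpos in atTop, ((x:ℝ)) ^ ((x:ℝ)) ≤ (f x : ℝ))
  h5 : (∃ c : ℝ, 1 ≤ c ∧ ∀ᶠ x : Rpos in atTop, (f x : ℝ) ≤ 2 ^ (c ^ ((x:ℝ)))) ∨
       (∀ᶠ x : Rpos in atTop, (2:ℝ) ^ (((x:ℝ)) ^ ((x:ℝ))) ≤ (f x : ℝ))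

lemma good_one : Good (fun _ : Rpos => (⟨1, one_pos⟩ : Rpos)) := by
  constructor
  · exact Filter.Eventually.of_forall fun x => le_refl _
  · exact Or.inl (Filter.Eventually.of_forall fun x => rfl)
  · exact Or.inl ⟨1, le_refl _, Filter.Eventually.of_forall fun x => le_refl _⟩
  · refine Or.inl ⟨1, le_refl _, ?_⟩
    filter_upwards [ev_le_coe 1] with x hx
    simpa using hx
  · refine Or.inl ⟨1, le_refl _, ?_⟩
    exact Filter.Eventually.of_forall fun x => by simp [Real.one_rpow]
  · refine Or.inl ⟨1, le_refl _, ?_⟩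
    refine Filter.Eventually.of_forall fun x => ?_
    show (1:ℝ) ≤ 2 ^ ((1:ℝ) ^ ((x:ℝ)))
    rw [Real.one_rpow, Real.rpow_one]; norm_num

lemma good_id : Good (fun x : Rpos => x) := by
  constructor
  · exact ev_le_coe 1
  · exact Or.inr (ev_le_coe 2)
  · exact Or.inr (Filter.Eventually.of_forall fun x => le_refl _)
  · refine Or.inl ⟨1, le_refl _, Filter.Eventually.of_forall fun x => by simp⟩
  · exact Or.inl ⟨2, one_le_two, ev_id_le⟩
  · refine Or.inl ⟨2, one_le_two, ?_⟩
    filter_upwards [ev_id_le] with x hx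
    calc ((x:ℝ)) ≤ 2 ^ ((x:ℝ)) := hx
      _ ≤ 2 ^ ((2:ℝ) ^ ((x:ℝ))) := Real.rpow_le_rpow_of_exponent_le one_le_two hx
section
variable {f g : Rpos → Rpos}

lemma good_add (Gf : Good f) (Gg : Good g) :
    Good (fun x => (⟨(f x : ℝ) + (g x : ℝ), add_pos (f x).2 (g x).2⟩ : Rpos)) := by
  constructor
  · filter_upwards [Gf.h0] with x hf
    show (1:ℝ) ≤ (f x : ℝ) + (g x : ℝ)
    have := (g x).2; linarith
  · refine Or.inr ?_
    filter_upwards [Gf.h0, Gg.h0] with x hf hg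
    show (2:ℝ) ≤ (f x : ℝ) + (g x : ℝ); linarith
  · rcases Gf.h2 with ⟨c, hc, hfc⟩ | hfx
    · rcases Gg.h2 with ⟨d, hd, hgd⟩ | hgx
      · refine Or.inl ⟨c + d, by linarith, ?_⟩
        filter_upwards [hfc, hgd] with x h1 h2
        show (f x : ℝ) + (g x : ℝ) ≤ c + d; linarith
      · refine Or.inr ?_
        filter_upwards [hgx] with x h1
        show ((x:ℝ)) ≤ (f x : ℝ) + (g x : ℝ)
        have := (f x).2; linarith
    · refine Or.inr ?_
      filter_upwards [hfx] with x h1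
      show ((x:ℝ)) ≤ (f x : ℝ) + (g x : ℝ)
      have := (g x).2; linarith
  · rcases Gf.h3 with ⟨c, hc, hfc⟩ | hfx
    · rcases Gg.h3 with ⟨d, hd, hgd⟩ | hgx
      · refine Or.inl ⟨c + d, by linarith, ?_⟩
        filter_upwards [hfc, hgd] with x h1 h2
        show (f x : ℝ) + (g x : ℝ) ≤ (c + d) * (x:ℝ)
        have := x.2; nlinarith
      · refine Or.inr ?_
        filter_upwards [hgx] with x h1
        show ((x:ℝ)) * ((x:ℝ)) ≤ (f x : ℝ) + (g x : ℝ)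
        have := (f x).2; linarith
    · refine Or.inr ?_
      filter_upwards [hfx] with x h1
      show ((x:ℝ)) * ((x:ℝ)) ≤ (f x : ℝ) + (g x : ℝ)
      have := (g x).2; linarith
  · rcases Gf.h4 with ⟨c, hc, hfc⟩ | hfx
    · rcases Gg.h4 with ⟨d, hd, hgd⟩ | hgx
      · refine Or.inl ⟨2 * max c d, by have := le_max_left c d; linarith, ?_⟩
        filter_upwards [hfc, hgd, ev_le_coe 1] with x h1 h2 hx1
        show (f x : ℝ) + (g x : ℝ) ≤ (2 * max c d) ^ ((x:ℝ))
        have hm0 : (0:ℝ) ≤ max c d := by have := le_max_left c d; linarith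
        have hcm := base_mono (by linarith) (le_max_left c d) x
        have hdm := base_mono (by linarith) (le_max_right c d) x
        calc (f x : ℝ) + (g x : ℝ) ≤ max c d ^ ((x:ℝ)) + max c d ^ ((x:ℝ)) := by
              have := le_trans h1 hcm; have := le_trans h2 hdm; linarith
          _ = 2 * max c d ^ ((x:ℝ)) := by ring
          _ ≤ (2 * max c d) ^ ((x:ℝ)) := two_mul_rpow hm0 x hx1
      · refine Or.inr ?_
        filter_upwards [hgx] with x h1
        show ((x:ℝ)) ^ ((x:ℝ)) ≤ (f x : ℝ) + (g x : ℝ)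
        have := (f x).2; linarith
    · refine Or.inr ?_
      filter_upwards [hfx] with x h1
      show ((x:ℝ)) ^ ((x:ℝ)) ≤ (f x : ℝ) + (g x : ℝ)
      have := (g x).2; linarith
  · rcases Gf.h5 with ⟨c, hc, hfc⟩ | hfx
    · rcases Gg.h5 with ⟨d, hd, hgd⟩ | hgx
      · refine Or.inl ⟨2 * max c d, by have := le_max_left c d; linarith, ?_⟩
        filter_upwards [hfc, hgd, ev_le_coe 1] with x h1 h2 hx1
        show (f x : ℝ) + (g x : ℝ) ≤ 2 ^ ((2 * max c d) ^ ((x:ℝ)))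
        set m := max c d with hmdef
        have hm1 : (1:ℝ) ≤ m := le_trans hc (le_max_left c d)
        have hm0 : (0:ℝ) ≤ m := by linarith
        have hcm := base_mono (by linarith) (le_max_left c d) x
        have hdm := base_mono (by linarith) (le_max_right c d) x
        have e1 : (f x : ℝ) ≤ 2 ^ (m ^ ((x:ℝ))) :=
          le_trans h1 (Real.rpow_le_rpow_of_exponent_le one_le_two hcm)
        have e2 : (g x : ℝ) ≤ 2 ^ (m ^ ((x:ℝ))) :=
          le_trans h2 (Real.rpow_le_rpow_of_exponent_le one_le_two hdm)
        have hm1x : (1:ℝ) ≤ m ^ ((x:ℝ)) := Real.one_le_rpow hm1 x.2.le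
        calc (f x : ℝ) + (g x : ℝ) ≤ 2 ^ (m ^ ((x:ℝ))) + 2 ^ (m ^ ((x:ℝ))) := by linarith
          _ = 2 ^ ((1:ℝ) + m ^ ((x:ℝ))) := by
              rw [Real.rpow_add two_pos, Real.rpow_one]; ring
          _ ≤ 2 ^ ((2 * m) ^ ((x:ℝ))) := by
              refine Real.rpow_le_rpow_of_exponent_le one_le_two ?_
              have := two_mul_rpow hm0 x hx1
              linarith
      · refine Or.inr ?_
        filter_upwards [hgx] with x h1
        show (2:ℝ) ^ (((x:ℝ)) ^ ((x:ℝ))) ≤ (f x : ℝ) + (g x : ℝ)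
        have := (f x).2; linarith
    · refine Or.inr ?_
      filter_upwards [hfx] with x h1
      show (2:ℝ) ^ (((x:ℝ)) ^ ((x:ℝ))) ≤ (f x : ℝ) + (g x : ℝ)
      have := (g x).2; linarith
lemma good_mul (Gf : Good f) (Gg : Good g) :
    Good (fun x => (⟨(f x : ℝ) * (g x : ℝ), mul_pos (f x).2 (g x).2⟩ : Rpos)) := by
  constructor
  · filter_upwards [Gf.h0, Gg.h0] with x hf hg
    show (1:ℝ) ≤ (f x : ℝ) * (g x : ℝ); nlinarith
  · rcases Gf.h1 with hf1 | hf2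
    · rcases Gg.h1 with hg1 | hg2
      · refine Or.inl ?_
        filter_upwards [hf1, hg1] with x h1 h2
        show (f x : ℝ) * (g x : ℝ) = 1; rw [h1, h2]; ring
      · refine Or.inr ?_
        filter_upwards [Gf.h0, hg2] with x h1 h2
        show (2:ℝ) ≤ (f x : ℝ) * (g x : ℝ); nlinarith
    · refine Or.inr ?_
      filter_upwards [hf2, Gg.h0] with x h1 h2
      show (2:ℝ) ≤ (f x : ℝ) * (g x : ℝ); nlinarith
  · rcases Gf.h2 with ⟨c, hc, hfc⟩ | hfx
    · rcases Gg.h2 with ⟨d, hd, hgd⟩ | hgx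
      · refine Or.inl ⟨c * d, (by nlinarith : (1:ℝ) ≤ c * d), ?_⟩
        filter_upwards [hfc, hgd, Gf.h0, Gg.h0] with x h1 h2 h3 h4
        show (f x : ℝ) * (g x : ℝ) ≤ c * d; nlinarith
      · refine Or.inr ?_
        filter_upwards [hgx, Gf.h0] with x h1 h2
        show ((x:ℝ)) ≤ (f x : ℝ) * (g x : ℝ); nlinarith [x.2]
    · refine Or.inr ?_
      filter_upwards [hfx, Gg.h0] with x h1 h2
      show ((x:ℝ)) ≤ (f x : ℝ) * (g x : ℝ); nlinarith [x.2]
  · rcases Gf.h2 with ⟨c, hc, hfc⟩ | hfx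
    · rcases Gg.h3 with ⟨d, hd, hgd⟩ | hgxx
      · refine Or.inl ⟨c * d, (by nlinarith : (1:ℝ) ≤ c * d), ?_⟩
        filter_upwards [hfc, hgd, Gf.h0, Gg.h0, ev_le_coe 1] with x h1 h2 h3 h4 h5
        show (f x : ℝ) * (g x : ℝ) ≤ c * d * (x:ℝ); nlinarith
      · refine Or.inr ?_
        filter_upwards [hgxx, Gf.h0] with x h1 h2
        show ((x:ℝ)) * ((x:ℝ)) ≤ (f x : ℝ) * (g x : ℝ); nlinarith [x.2]
    · rcases Gg.h2 with ⟨d, hd, hgd⟩ | hgx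
      · rcases Gf.h3 with ⟨c, hc, hfc⟩ | hfxx
        · refine Or.inl ⟨c * d, (by nlinarith : (1:ℝ) ≤ c * d), ?_⟩
          filter_upwards [hfc, hgd, Gf.h0, Gg.h0, ev_le_coe 1] with x h1 h2 h3 h4 h5
          show (f x : ℝ) * (g x : ℝ) ≤ c * d * (x:ℝ); nlinarith
        · refine Or.inr ?_
          filter_upwards [hfxx, Gg.h0] with x h1 h2
          show ((x:ℝ)) * ((x:ℝ)) ≤ (f x : ℝ) * (g x : ℝ); nlinarith [x.2]
      · refine Or.inr ?_
        filter_upwards [hfx, hgx] with x h1 h2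
        show ((x:ℝ)) * ((x:ℝ)) ≤ (f x : ℝ) * (g x : ℝ)
        exact mul_le_mul h1 h2 x.2.le (lt_of_lt_of_le x.2 h1).le
  · rcases Gf.h4 with ⟨c, hc, hfc⟩ | hfx
    · rcases Gg.h4 with ⟨d, hd, hgd⟩ | hgx
      · refine Or.inl ⟨c * d, (by nlinarith : (1:ℝ) ≤ c * d), ?_⟩
        filter_upwards [hfc, hgd, Gf.h0, Gg.h0] with x h1 h2 h3 h4
        show (f x : ℝ) * (g x : ℝ) ≤ (c * d) ^ ((x:ℝ))
        rw [Real.mul_rpow (by linarith) (by linarith)]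
        exact mul_le_mul h1 h2 (by linarith) (Real.rpow_nonneg (by linarith) _)
      · refine Or.inr ?_
        filter_upwards [hgx, Gf.h0] with x h1 h2
        show ((x:ℝ)) ^ ((x:ℝ)) ≤ (f x : ℝ) * (g x : ℝ)
        nlinarith [Real.rpow_pos_of_pos x.2 ((x:ℝ))]
    · refine Or.inr ?_
      filter_upwards [hfx, Gg.h0] with x h1 h2
      show ((x:ℝ)) ^ ((x:ℝ)) ≤ (f x : ℝ) * (g x : ℝ)
      nlinarith [Real.rpow_pos_of_pos x.2 ((x:ℝ))]
  · rcases Gf.h5 with ⟨c, hc, hfc⟩ | hfx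
    · rcases Gg.h5 with ⟨d, hd, hgd⟩ | hgx
      · refine Or.inl ⟨2 * max c d, by have := le_max_left c d; linarith, ?_⟩
        filter_upwards [hfc, hgd, Gf.h0, Gg.h0, ev_le_coe 1] with x h1 h2 h3 h4 hx1
        show (f x : ℝ) * (g x : ℝ) ≤ 2 ^ ((2 * max c d) ^ ((x:ℝ)))
        set m := max c d with hmdef
        have hm1 : (1:ℝ) ≤ m := le_trans hc (le_max_left c d)
        have hcm := base_mono (by linarith) (le_max_left c d) x
        have hdm := base_mono (by linarith) (le_max_right c d) x
        have e1 : (f x : ℝ) ≤ 2 ^ (m ^ ((x:ℝ))) :=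
          le_trans h1 (Real.rpow_le_rpow_of_exponent_le one_le_two hcm)
        have e2 : (g x : ℝ) ≤ 2 ^ (m ^ ((x:ℝ))) :=
          le_trans h2 (Real.rpow_le_rpow_of_exponent_le one_le_two hdm)
        calc (f x : ℝ) * (g x : ℝ) ≤ 2 ^ (m ^ ((x:ℝ))) * 2 ^ (m ^ ((x:ℝ))) :=
              mul_le_mul e1 e2 (by linarith) (Real.rpow_nonneg (by norm_num) _)
          _ = 2 ^ (m ^ ((x:ℝ)) + m ^ ((x:ℝ))) := (Real.rpow_add two_pos _ _).symm
          _ ≤ 2 ^ ((2 * m) ^ ((x:ℝ))) := by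
              refine Real.rpow_le_rpow_of_exponent_le one_le_two ?_
              have := two_mul_rpow (by linarith : (0:ℝ) ≤ m) x hx1
              linarith
      · refine Or.inr ?_
        filter_upwards [hgx, Gf.h0] with x h1 h2
        show (2:ℝ) ^ (((x:ℝ)) ^ ((x:ℝ))) ≤ (f x : ℝ) * (g x : ℝ)
        nlinarith [Real.rpow_pos_of_pos two_pos (((x:ℝ)) ^ ((x:ℝ)))]
    · refine Or.inr ?_
      filter_upwards [hfx, Gg.h0] with x h1 h2
      show (2:ℝ) ^ (((x:ℝ)) ^ ((x:ℝ))) ≤ (f x : ℝ) * (g x : ℝ)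
      nlinarith [Real.rpow_pos_of_pos two_pos (((x:ℝ)) ^ ((x:ℝ)))]
lemma good_pow (Gf : Good f) (Gg : Good g) :
    Good (fun x => (⟨(f x : ℝ) ^ (g x : ℝ), Real.rpow_pos_of_pos (f x).2 _⟩ : Rpos)) := by
  rcases Gf.h1 with hf1 | hf2
  · -- f is eventually 1
    have ev1 : ∀ᶠ x : Rpos in atTop, (f x : ℝ) ^ (g x : ℝ) = 1 := by
      filter_upwards [hf1] with x h; rw [h, Real.one_rpow]
    constructor
    · filter_upwards [ev1] with x h
      show (1:ℝ) ≤ (f x : ℝ) ^ (g x : ℝ); rw [h]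
    · exact Or.inl ev1
    · refine Or.inl ⟨1, le_refl _, ?_⟩
      filter_upwards [ev1] with x h
      show (f x : ℝ) ^ (g x : ℝ) ≤ 1; rw [h]
    · refine Or.inl ⟨1, le_refl _, ?_⟩
      filter_upwards [ev1, ev_le_coe 1] with x h hx
      show (f x : ℝ) ^ (g x : ℝ) ≤ 1 * (x:ℝ); rw [h]; linarith
    · refine Or.inl ⟨1, le_refl _, ?_⟩
      filter_upwards [ev1] with x h
      show (f x : ℝ) ^ (g x : ℝ) ≤ (1:ℝ) ^ ((x:ℝ)); rw [h, Real.one_rpow]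
    · refine Or.inl ⟨1, le_refl _, ?_⟩
      filter_upwards [ev1] with x h
      show (f x : ℝ) ^ (g x : ℝ) ≤ (2:ℝ) ^ ((1:ℝ) ^ ((x:ℝ)))
      rw [h, Real.one_rpow, Real.rpow_one]; norm_num
  · -- f is eventually ≥ 2
    have pow_ge_base : ∀ᶠ x : Rpos in atTop, (f x : ℝ) ≤ (f x : ℝ) ^ (g x : ℝ) := by
      filter_upwards [Gf.h0, Gg.h0] with x h1 h2
      calc (f x : ℝ) = (f x : ℝ) ^ (1:ℝ) := (Real.rpow_one _).symm
        _ ≤ (f x : ℝ) ^ (g x : ℝ) := Real.rpow_le_rpow_of_exponent_le h1 h2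
    constructor
    · filter_upwards [Gf.h0] with x h
      exact Real.one_le_rpow h (g x).2.le
    · refine Or.inr ?_
      filter_upwards [hf2, pow_ge_base] with x h1 h2
      show (2:ℝ) ≤ (f x : ℝ) ^ (g x : ℝ); linarith
    · -- bounded vs ≥ x
      rcases Gg.h2 with ⟨d, hd, hgd⟩ | hgx
      · rcases Gf.h2 with ⟨c, hc, hfc⟩ | hfx
        · refine Or.inl ⟨c ^ d, Real.one_le_rpow hc (by linarith), ?_⟩
          filter_upwards [hfc, hgd, Gf.h0] with x h1 h2 h3
          calc (f x : ℝ) ^ (g x : ℝ) ≤ c ^ (g x : ℝ) :=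
                Real.rpow_le_rpow (by linarith) h1 (g x).2.le
            _ ≤ c ^ d := Real.rpow_le_rpow_of_exponent_le hc h2
        · refine Or.inr ?_
          filter_upwards [hfx, pow_ge_base] with x h1 h2
          show ((x:ℝ)) ≤ (f x : ℝ) ^ (g x : ℝ); linarith
      · refine Or.inr ?_
        filter_upwards [hf2, hgx, ev_id_le] with x h1 h2 h3
        show ((x:ℝ)) ≤ (f x : ℝ) ^ (g x : ℝ)
        calc ((x:ℝ)) ≤ 2 ^ ((x:ℝ)) := h3
          _ ≤ 2 ^ (g x : ℝ) := Real.rpow_le_rpow_of_exponent_le one_le_two h2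
          _ ≤ (f x : ℝ) ^ (g x : ℝ) := Real.rpow_le_rpow (by norm_num) h1 (g x).2.le
    · -- linear vs ≥ x*x
      rcases Gg.h1 with hg1 | hg2
      · -- g eventually 1 : f^g = f
        have evf : ∀ᶠ x : Rpos in atTop, (f x : ℝ) ^ (g x : ℝ) = (f x : ℝ) := by
          filter_upwards [hg1] with x h; rw [h, Real.rpow_one]
        rcases Gf.h3 with ⟨c, hc, hfc⟩ | hfxx
        · refine Or.inl ⟨c, hc, ?_⟩
          filter_upwards [evf, hfc] with x h1 h2
          show (f x : ℝ) ^ (g x : ℝ) ≤ c * (x:ℝ); rw [h1]; exact h2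
        · refine Or.inr ?_
          filter_upwards [evf, hfxx] with x h1 h2
          show ((x:ℝ)) * ((x:ℝ)) ≤ (f x : ℝ) ^ (g x : ℝ); rw [h1]; exact h2
      · rcases Gf.h2 with ⟨c, hc, hfc⟩ | hfx
        · rcases Gg.h2 with ⟨d, hd, hgd⟩ | hgx
          · refine Or.inl ⟨c ^ d, Real.one_le_rpow hc (by linarith), ?_⟩
            filter_upwards [hfc, hgd, Gf.h0, ev_le_coe 1] with x h1 h2 h3 h4
            show (f x : ℝ) ^ (g x : ℝ) ≤ c ^ d * (x:ℝ)
            have hcd : (f x : ℝ) ^ (g x : ℝ) ≤ c ^ d := by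
              calc (f x : ℝ) ^ (g x : ℝ) ≤ c ^ (g x : ℝ) :=
                    Real.rpow_le_rpow (by linarith) h1 (g x).2.le
                _ ≤ c ^ d := Real.rpow_le_rpow_of_exponent_le hc h2
            nlinarith [Real.rpow_nonneg (show (0:ℝ) ≤ c by linarith) d]
          · refine Or.inr ?_
            filter_upwards [hf2, hgx, ev_sq_le] with x h1 h2 h3
            show ((x:ℝ)) * ((x:ℝ)) ≤ (f x : ℝ) ^ (g x : ℝ)
            calc ((x:ℝ)) * ((x:ℝ)) ≤ 2 ^ ((x:ℝ)) := h3
              _ ≤ 2 ^ (g x : ℝ) := Real.rpow_le_rpow_of_exponent_le one_le_two h2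
              _ ≤ (f x : ℝ) ^ (g x : ℝ) := Real.rpow_le_rpow (by norm_num) h1 (g x).2.le
        · refine Or.inr ?_
          filter_upwards [hfx, hg2, ev_le_coe 1] with x h1 h2 h3
          show ((x:ℝ)) * ((x:ℝ)) ≤ (f x : ℝ) ^ (g x : ℝ)
          calc ((x:ℝ)) * ((x:ℝ)) = ((x:ℝ)) ^ (2:ℝ) := (sq_rpow x).symm
            _ ≤ ((x:ℝ)) ^ (g x : ℝ) := Real.rpow_le_rpow_of_exponent_le h3 h2
            _ ≤ (f x : ℝ) ^ (g x : ℝ) := Real.rpow_le_rpow x.2.le h1 (g x).2.le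
    · -- ≤ c^x vs ≥ x^x
      rcases Gg.h3 with ⟨d, hd, hgd⟩ | hgxx
      · rcases Gf.h2 with ⟨c, hc, hfc⟩ | hfx
        · have hc0 : (0:ℝ) ≤ c := by linarith
          refine Or.inl ⟨c ^ d, Real.one_le_rpow hc (by linarith), ?_⟩
          filter_upwards [hfc, hgd, Gf.h0] with x h1 h2 h3
          show (f x : ℝ) ^ (g x : ℝ) ≤ (c ^ d) ^ ((x:ℝ))
          calc (f x : ℝ) ^ (g x : ℝ) ≤ c ^ (g x : ℝ) :=
                Real.rpow_le_rpow (by linarith) h1 (g x).2.le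
            _ ≤ c ^ (d * (x:ℝ)) := Real.rpow_le_rpow_of_exponent_le hc h2
            _ = (c ^ d) ^ ((x:ℝ)) := Real.rpow_mul hc0 d _
        · rcases Gg.h2 with ⟨d', hd', hgd'⟩ | hgx
          · rcases Gf.h4 with ⟨c, hc, hfc⟩ | hfxx
            · have hc0 : (0:ℝ) ≤ c := by linarith
              refine Or.inl ⟨c ^ d', Real.one_le_rpow hc (by linarith), ?_⟩
              filter_upwards [hfc, hgd', Gf.h0] with x h1 h2 h3
              show (f x : ℝ) ^ (g x : ℝ) ≤ (c ^ d') ^ ((x:ℝ))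
              have hbase : (1:ℝ) ≤ c ^ ((x:ℝ)) := Real.one_le_rpow hc x.2.le
              calc (f x : ℝ) ^ (g x : ℝ) ≤ (c ^ ((x:ℝ))) ^ (g x : ℝ) :=
                    Real.rpow_le_rpow (by linarith) h1 (g x).2.le
                _ ≤ (c ^ ((x:ℝ))) ^ d' := Real.rpow_le_rpow_of_exponent_le hbase h2
                _ = c ^ (((x:ℝ)) * d') := (Real.rpow_mul hc0 _ _).symm
                _ = c ^ (d' * ((x:ℝ))) := by ring_nf
                _ = (c ^ d') ^ ((x:ℝ)) := Real.rpow_mul hc0 d' _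
            · refine Or.inr ?_
              filter_upwards [hfxx, pow_ge_base] with x h1 h2
              show ((x:ℝ)) ^ ((x:ℝ)) ≤ (f x : ℝ) ^ (g x : ℝ); linarith
          · refine Or.inr ?_
            filter_upwards [hfx, hgx, ev_le_coe 1] with x h1 h2 h3
            show ((x:ℝ)) ^ ((x:ℝ)) ≤ (f x : ℝ) ^ (g x : ℝ)
            calc ((x:ℝ)) ^ ((x:ℝ)) ≤ ((x:ℝ)) ^ (g x : ℝ) :=
                  Real.rpow_le_rpow_of_exponent_le h3 h2
              _ ≤ (f x : ℝ) ^ (g x : ℝ) := Real.rpow_le_rpow x.2.le h1 (g x).2.le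
      · refine Or.inr ?_
        filter_upwards [hf2, hgxx, ev_xx_le] with x h1 h2 h3
        show ((x:ℝ)) ^ ((x:ℝ)) ≤ (f x : ℝ) ^ (g x : ℝ)
        calc ((x:ℝ)) ^ ((x:ℝ)) ≤ 2 ^ (((x:ℝ)) * ((x:ℝ))) := h3
          _ ≤ 2 ^ (g x : ℝ) := Real.rpow_le_rpow_of_exponent_le one_le_two h2
          _ ≤ (f x : ℝ) ^ (g x : ℝ) := Real.rpow_le_rpow (by norm_num) h1 (g x).2.le
    · -- ≤ 2^(c^x) vs ≥ 2^(x^x)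
      rcases Gf.h5 with ⟨c, hc, hfc⟩ | hfbig
      · rcases Gg.h4 with ⟨d, hd, hgd⟩ | hgbig
        · refine Or.inl ⟨c * d, by nlinarith, ?_⟩
          filter_upwards [hfc, hgd, Gf.h0] with x h1 h2 h3
          show (f x : ℝ) ^ (g x : ℝ) ≤ 2 ^ ((c * d) ^ ((x:ℝ)))
          have hb : (1:ℝ) ≤ 2 ^ (c ^ ((x:ℝ))) :=
            Real.one_le_rpow one_le_two (Real.rpow_nonneg (by linarith) _)
          calc (f x : ℝ) ^ (g x : ℝ) ≤ (2 ^ (c ^ ((x:ℝ)))) ^ (g x : ℝ) :=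
                Real.rpow_le_rpow (by linarith) h1 (g x).2.le
            _ ≤ (2 ^ (c ^ ((x:ℝ)))) ^ (d ^ ((x:ℝ))) :=
                Real.rpow_le_rpow_of_exponent_le hb h2
            _ = 2 ^ (c ^ ((x:ℝ)) * d ^ ((x:ℝ))) := (Real.rpow_mul (by norm_num) _ _).symm
            _ = 2 ^ ((c * d) ^ ((x:ℝ))) := by
                rw [Real.mul_rpow (show (0:ℝ) ≤ c by linarith) (show (0:ℝ) ≤ d by linarith)]
        · refine Or.inr ?_
          filter_upwards [hf2, hgbig] with x h1 h2
          show (2:ℝ) ^ (((x:ℝ)) ^ ((x:ℝ))) ≤ (f x : ℝ) ^ (g x : ℝ)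
          calc (2:ℝ) ^ (((x:ℝ)) ^ ((x:ℝ))) ≤ 2 ^ (g x : ℝ) :=
                Real.rpow_le_rpow_of_exponent_le one_le_two h2
            _ ≤ (f x : ℝ) ^ (g x : ℝ) := Real.rpow_le_rpow (by norm_num) h1 (g x).2.le
      · refine Or.inr ?_
        filter_upwards [hfbig, pow_ge_base] with x h1 h2
        show (2:ℝ) ^ (((x:ℝ)) ^ ((x:ℝ))) ≤ (f x : ℝ) ^ (g x : ℝ); linarith
end

lemma sk_good {f : Rpos → Rpos} (hf : Sk f) : Good f := by
  induction hf with
  | one => exact good_one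
  | id => exact good_id
  | add hf hg ihf ihg => exact good_add ihf ihg
  | mul hf hg ihf ihg => exact good_mul ihf ihg
  | pow hf hg ihf ihg => exact good_pow ihf ihg

/-- If `f` is a Skolem function with `f < 2^{x^x}`, then there exists `n ∈ ℕ`
such that `f < 2^{n^x}`. -/
theorem skolem_below_two_x_x_bounded_by_two_n_x (f : Rpos → Rpos) (hf : Sk f)
    (h : SkLt f twoXX) : ∃ n : ℕ, SkLt f (twoPowNPowX n) := by
  have Gf : Good f := sk_good hf
  rcases Gf.h5 with ⟨c, hc, hfc⟩ | hbig
  · refine ⟨⌈c⌉₊ + 1, ?_⟩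
    have hcn : c < ((⌈c⌉₊ + 1 : ℕ) : ℝ) := by
      push_cast
      have := Nat.le_ceil c
      linarith
    filter_upwards [hfc] with x h1
    show (f x : ℝ) < (2:ℝ) ^ ((((⌈c⌉₊ + 1 : ℕ) : ℝ)) ^ ((x:ℝ)))
    refine lt_of_le_of_lt h1 ?_
    refine Real.rpow_lt_rpow_of_exponent_lt one_lt_two ?_
    exact Real.rpow_lt_rpow (by linarith) hcn x.2
  · exfalso
    haveI : Nonempty Rpos := ⟨⟨1, one_pos⟩⟩
    obtain ⟨x, hx1, hx2⟩ := (h.and hbig).exists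
    have hx1' : (f x : ℝ) < (2:ℝ) ^ (((x:ℝ)) ^ ((x:ℝ))) := hx1
    linarith
end

section
/- The components of Sk that are < x^x are exactly the following Skolem functions: the constant function 1, the identity function x, and the functions p^x where p ∈ ℕ is a prime number. -/
open Filter

/-- Pointwise sum of positive functions. -/
def skAdd (f g : Rpos → Rpos) : Rpos → Rpos :=
  fun x => ⟨(f x : ℝ) + (g x : ℝ), add_pos (f x).2 (g x).2⟩

/-- Pointwise product of positive functions. -/
def skMul (f g : Rpos → Rpos) : Rpos → Rpos :=
  fun x => ⟨(f x : ℝ) * (g x : ℝ), mul_pos (f x).2 (g x).2⟩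

/-- A Skolem function is additively irreducible if it is not the sum of two smaller
Skolem functions. -/
def SkAddIrreducible (f : Rpos → Rpos) : Prop :=
  ¬ ∃ g h : Rpos → Rpos, Sk g ∧ Sk h ∧ SkLt g f ∧ SkLt h f ∧ f = skAdd g h

/-- A Skolem function is multiplicatively irreducible if it is not the product of two
smaller Skolem functions. -/
def MulIrreducible (f : Rpos → Rpos) : Prop :=
  ¬ ∃ g h : Rpos → Rpos, Sk g ∧ Sk h ∧ SkLt g f ∧ SkLt h f ∧ f = skMul g h

/-- A component is a Skolem function which is both additively and multiplicatively
irreducible. -/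
def IsComponent (f : Rpos → Rpos) : Prop := Sk f ∧ SkAddIrreducible f ∧ MulIrreducible f

/-- The constant function `1`. -/
def oneFun : Rpos → Rpos := fun _ => ⟨1, one_pos⟩

/-- The identity function `x`. -/
def xFun : Rpos → Rpos := fun x => x

/-- The function `x^x`. -/
noncomputable def xPowX : Rpos → Rpos :=
  fun x => ⟨(x : ℝ) ^ (x : ℝ), Real.rpow_pos_of_pos x.2 _⟩


section Aux

instance : Nonempty Rpos := ⟨⟨1, one_pos⟩⟩

lemma ev_transfer {P : ℝ → Prop} (h : ∀ᶠ y in (@atTop ℝ _), P y) :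
    ∀ᶠ x in (atTop : Filter Rpos), P x.1 := by
  obtain ⟨C, hC⟩ := eventually_atTop.1 h
  have hpos : (0:ℝ) < max C 1 := lt_of_lt_of_le one_pos (le_max_right _ _)
  filter_upwards [eventually_ge_atTop (⟨max C 1, hpos⟩ : Rpos)] with x hx
  exact hC _ (le_trans (le_max_left C 1) hx)

lemma Rpos_coe_mk (a : ℝ) (h : 0 < a) : ((⟨a, h⟩ : Rpos) : ℝ) = a := rfl

lemma ev_one_le : ∀ᶠ x in (atTop : Filter Rpos), 1 ≤ x.1 :=
  ev_transfer (eventually_ge_atTop (1:ℝ))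

example : (atTop : Filter Rpos).NeBot := atTop_neBot

open Real in
lemma lt_two_rpow (t : ℝ) (ht : 0 ≤ t) : t < (2:ℝ) ^ t := by
  rw [Real.rpow_def_of_pos two_pos]
  set l := Real.log 2 with hl
  have hl1 : 0.6931471803 < l := Real.log_two_gt_d9
  have hl2 : l < 0.6931471808 := Real.log_two_lt_d9
  have h0 : 0 ≤ l * t / 2 := by positivity
  have h1 : (1 + l * t / 2) ^ 2 ≤ Real.exp (l * t) := by
    have h2 : l * t / 2 + 1 ≤ Real.exp (l * t / 2) := Real.add_one_le_exp _
    calc (1 + l * t / 2) ^ 2 ≤ (Real.exp (l * t / 2)) ^ 2 := by nlinarith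
      _ = Real.exp (l * t) := by rw [sq, ← Real.exp_add]; ring_nf
  nlinarith [sq_nonneg (t * l ^ 2 + 2 * (l - 1)), sq_nonneg (1 + l * t / 2)]

lemma log_lt_mul {c : ℝ} (hc : 0 < c) : ∀ᶠ x in (@atTop ℝ _), Real.log x < c * x := by
  have h := Real.isLittleO_log_id_atTop.def (half_pos hc)
  filter_upwards [h, eventually_gt_atTop (0:ℝ)] with x hx hx0
  have : |Real.log x| ≤ c / 2 * |x| := by simpa [Real.norm_eq_abs] using hx
  calc Real.log x ≤ |Real.log x| := le_abs_self _
    _ ≤ c / 2 * |x| := this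
    _ = c / 2 * x := by rw [abs_of_pos hx0]
    _ < c * x := by nlinarith

lemma poly_lt_rpow (C : ℝ) (K : ℕ) {b : ℝ} (hb : 1 < b) :
    ∀ᶠ x in (@atTop ℝ _), C * x ^ K < b ^ x := by
  have hlb : 0 < Real.log b := Real.log_pos hb
  have h := tendsto_exp_mul_div_rpow_atTop (K : ℝ) _ hlb
  have h2 := h.eventually_gt_atTop C
  filter_upwards [h2, eventually_gt_atTop (0:ℝ)] with x hx hx0
  rw [Real.rpow_def_of_pos (lt_trans one_pos hb)]
  have hxK : (0:ℝ) < x ^ (K:ℝ) := Real.rpow_pos_of_pos hx0 _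
  have hcast : x ^ (K:ℝ) = x ^ K := Real.rpow_natCast x K
  rw [lt_div_iff₀ hxK, hcast] at hx
  exact hx

lemma decay_lt_one (C : ℝ) (K : ℕ) {r : ℝ} (hr0 : 0 ≤ r) (hr1 : r < 1) :
    ∀ᶠ x in (@atTop ℝ _), C * x ^ K * r ^ x < 1 := by
  rcases eq_or_lt_of_le hr0 with h0 | h0
  · filter_upwards [eventually_gt_atTop (0:ℝ)] with x hx
    rw [← h0, Real.zero_rpow (ne_of_gt hx)]
    norm_num
  · have hb : 1 < r⁻¹ := one_lt_inv_iff₀.mpr ⟨h0, hr1⟩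
    filter_upwards [poly_lt_rpow C K hb, eventually_gt_atTop (0:ℝ)] with x hx hx0
    have hrx : 0 < r ^ x := Real.rpow_pos_of_pos h0 x
    have hinv : (r⁻¹ : ℝ) ^ x = (r ^ x)⁻¹ := Real.inv_rpow hr0 x
    rw [hinv] at hx
    have h2 := mul_lt_mul_of_pos_right hx hrx
    rwa [inv_mul_cancel₀ (ne_of_gt hrx)] at h2

-- chunk B: list machinery
abbrev Mono := ℕ × ℕ × ℕ

noncomputable def term (x : Rpos) (t : Mono) : ℝ :=
  (t.1 : ℝ) * (x : ℝ) ^ t.2.1 * (t.2.2 : ℝ) ^ (x : ℝ)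

noncomputable def evalL (L : List Mono) (x : Rpos) : ℝ := (L.map (term x)).sum

def validL (L : List Mono) : Prop := ∀ t ∈ L, 1 ≤ t.1 ∧ 1 ≤ t.2.2

def EP (f : Rpos → Rpos) : Prop :=
  ∃ L : List Mono, L ≠ [] ∧ validL L ∧ ∀ x, (f x : ℝ) = evalL L x

lemma term_pos {t : Mono} (h1 : 1 ≤ t.1) (h2 : 1 ≤ t.2.2) (x : Rpos) : 0 < term x t := by
  have : (0:ℝ) < (t.2.2 : ℝ) ^ (x : ℝ) :=
    Real.rpow_pos_of_pos (by exact_mod_cast Nat.lt_of_lt_of_le Nat.zero_lt_one h2) _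
  have h1' : (0:ℝ) < (t.1 : ℝ) := by exact_mod_cast h1
  have := x.2
  unfold term; positivity

lemma evalL_pos {L : List Mono} (hne : L ≠ []) (hv : validL L) (x : Rpos) : 0 < evalL L x := by
  induction L with
  | nil => exact absurd rfl hne
  | cons t l ih =>
    have ht := hv t (List.mem_cons_self)
    have htp := term_pos ht.1 ht.2 x
    rcases eq_or_ne l [] with rfl | hl
    · simpa [evalL]
    · have := ih hl (fun s hs => hv s (List.mem_cons_of_mem _ hs))
      simp only [evalL, List.map_cons, List.sum_cons] at *
      linarith

lemma term_le_evalL {L : List Mono} (hv : validL L) {t : Mono} (ht : t ∈ L) (x : Rpos) :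
    term x t ≤ evalL L x := by
  refine List.single_le_sum ?_ _ (List.mem_map_of_mem (f := term x) ht)
  intro y hy
  obtain ⟨s, hs, rfl⟩ := List.mem_map.1 hy
  exact (term_pos (hv s hs).1 (hv s hs).2 x).le

def mulL (L1 L2 : List Mono) : List Mono :=
  L1.flatMap fun t1 => L2.map fun t2 => (t1.1 * t2.1, t1.2.1 + t2.2.1, t1.2.2 * t2.2.2)

lemma mulL_ne_nil {L1 L2 : List Mono} (h1 : L1 ≠ []) (h2 : L2 ≠ []) : mulL L1 L2 ≠ [] := by
  obtain ⟨t1, l1, rfl⟩ := List.exists_cons_of_ne_nil h1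
  obtain ⟨t2, l2, rfl⟩ := List.exists_cons_of_ne_nil h2
  simp [mulL]

lemma mulL_valid {L1 L2 : List Mono} (h1 : validL L1) (h2 : validL L2) : validL (mulL L1 L2) := by
  intro t ht
  simp only [mulL, List.mem_flatMap, List.mem_map] at ht
  obtain ⟨t1, ht1, t2, ht2, rfl⟩ := ht
  exact ⟨Nat.one_le_iff_ne_zero.2 (Nat.mul_ne_zero
      (Nat.one_le_iff_ne_zero.1 (h1 t1 ht1).1) (Nat.one_le_iff_ne_zero.1 (h2 t2 ht2).1)),
    Nat.one_le_iff_ne_zero.2 (Nat.mul_ne_zero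
      (Nat.one_le_iff_ne_zero.1 (h1 t1 ht1).2) (Nat.one_le_iff_ne_zero.1 (h2 t2 ht2).2))⟩

lemma term_mul (x : Rpos) (t1 t2 : Mono) :
    term x (t1.1 * t2.1, t1.2.1 + t2.2.1, t1.2.2 * t2.2.2) = term x t1 * term x t2 := by
  unfold term
  have hm : ((t1.2.2 * t2.2.2 : ℕ) : ℝ) ^ (x:ℝ) = (t1.2.2:ℝ)^(x:ℝ) * (t2.2.2:ℝ)^(x:ℝ) := by
    push_cast
    exact Real.mul_rpow (Nat.cast_nonneg _) (Nat.cast_nonneg _)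
  rw [hm]
  push_cast
  rw [pow_add]
  ring

lemma evalL_mul (L1 L2 : List Mono) (x : Rpos) :
    evalL (mulL L1 L2) x = evalL L1 x * evalL L2 x := by
  induction L1 with
  | nil => simp [evalL, mulL]
  | cons t l ih =>
    simp only [mulL, List.flatMap_cons, evalL, List.map_append, List.sum_append, List.map_cons,
      List.sum_cons] at *
    rw [ih]
    have : ((L2.map fun t2 => (t.1 * t2.1, t.2.1 + t2.2.1, t.2.2 * t2.2.2)).map (term x)).sum
        = term x t * (L2.map (term x)).sum := by
      rw [List.map_map, ← List.sum_map_mul_left]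
      congr 1
      apply List.map_congr_left
      intro t2 _
      simp only [Function.comp_apply]
      exact term_mul x t t2
    rw [this]
    ring

-- chunk C: Sk lemmas
lemma Sk_of_eq {f g : Rpos → Rpos} (hf : Sk f) (h : ∀ x, (f x : ℝ) = (g x : ℝ)) : Sk g := by
  have : f = g := funext fun x => Subtype.ext (h x)
  exact this ▸ hf

lemma Sk_const {n : ℕ} (hn : 1 ≤ n) : Sk (fun _ => (⟨(n : ℝ), by exact_mod_cast Nat.lt_of_lt_of_le Nat.zero_lt_one hn⟩ : Rpos)) := by
  induction n with
  | zero => omega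
  | succ m ih =>
    rcases Nat.eq_or_lt_of_le hn with h | h
    · exact Sk_of_eq Sk.one (by simp [← h])
    · have hm : 1 ≤ m := by omega
      exact Sk_of_eq (Sk.add (ih hm) Sk.one) (by intro x; push_cast; ring)

lemma Sk_mono {a k m : ℕ} (ha : 1 ≤ a) (hm : 1 ≤ m) :
    Sk (fun x => (⟨term x (a, k, m), term_pos ha hm x⟩ : Rpos)) := by
  have hxk : Sk (fun x : Rpos => (⟨(x:ℝ)^k, pow_pos x.2 k⟩ : Rpos)) := by
    clear ha hm
    induction k with
    | zero => exact Sk_of_eq Sk.one (by simp)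
    | succ j ih => exact Sk_of_eq (Sk.mul ih Sk.id) (by intro x; simp [pow_succ])
  have hmx : Sk (fun x : Rpos => (⟨(m:ℝ)^(x:ℝ),
      Real.rpow_pos_of_pos (by exact_mod_cast Nat.lt_of_lt_of_le Nat.zero_lt_one hm) _⟩ : Rpos)) :=
    Sk.pow (Sk_const hm) Sk.id
  exact Sk_of_eq (Sk.mul (Sk.mul (Sk_const ha) hxk) hmx) (by intro x; simp [term])

lemma Sk_evalL {L : List Mono} (hne : L ≠ []) (hv : validL L) :
    Sk (fun x => (⟨evalL L x, evalL_pos hne hv x⟩ : Rpos)) := by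
  induction L with
  | nil => exact absurd rfl hne
  | cons t l ih =>
    have ht := hv t (List.mem_cons_self)
    have hmono := Sk_mono (k := t.2.1) ht.1 ht.2
    rcases eq_or_ne l [] with rfl | hl
    · exact Sk_of_eq hmono (by intro x; simp [evalL])
    · have hrest := ih hl (fun s hs => hv s (List.mem_cons_of_mem _ hs))
      exact Sk_of_eq (Sk.add hmono hrest) (by intro x; simp [evalL])

lemma Sk_ge_one {f : Rpos → Rpos} (hf : Sk f) : ∀ x : Rpos, 1 ≤ (x:ℝ) → 1 ≤ (f x : ℝ) := by
  induction hf with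
  | one => intro x _; simp
  | id => intro x hx; exact hx
  | add f g ihf ihg => intro x hx; have := ihf x hx; have := ihg x hx; dsimp only; linarith
  | mul f g ihf ihg =>
    intro x hx
    have h1 := ihf x hx; have h2 := ihg x hx
    dsimp only
    nlinarith
  | pow f g ihf ihg =>
    intro x hx
    dsimp only
    calc (1:ℝ) = _ ^ (0:ℝ) := (Real.rpow_zero _).symm
      _ ≤ _ := Real.rpow_le_rpow_of_exponent_le (ihf x hx) (le_of_lt (by exact Subtype.prop _))

lemma Sk_dichotomy {f : Rpos → Rpos} (hf : Sk f) :
    (∃ n : ℕ, 1 ≤ n ∧ ∀ x, (f x : ℝ) = n) ∨ (∀ x : Rpos, 1 ≤ (x:ℝ) → (x:ℝ) ≤ (f x : ℝ)) := by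
  induction hf with
  | one => exact Or.inl ⟨1, le_refl _, fun x => by simp⟩
  | id => exact Or.inr (fun x _ => le_refl _)
  | @add f g hf' hg' ihf ihg =>
    rcases ihf with ⟨n, hn, he⟩ | hgr
    · rcases ihg with ⟨m, hm, he'⟩ | hgr'
      · exact Or.inl ⟨n + m, by omega, fun x => by dsimp only; rw [he x, he' x]; push_cast; ring⟩
      · refine Or.inr fun x hx => ?_
        have h1 := Sk_ge_one hf' x hx
        have := hgr' x hx
        dsimp only; linarith
    · refine Or.inr fun x hx => ?_
      have := hgr x hx
      have := (Subtype.prop (g x) : (0:ℝ) < _)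
      dsimp only; linarith
  | @mul f g hf' hg' ihf ihg =>
    rcases ihf with ⟨n, hn, he⟩ | hgr
    · rcases ihg with ⟨m, hm, he'⟩ | hgr'
      · exact Or.inl ⟨n * m, by exact Nat.one_le_iff_ne_zero.2 (Nat.mul_ne_zero (by omega) (by omega)),
          fun x => by dsimp only; rw [he x, he' x]; push_cast; ring⟩
      · refine Or.inr fun x hx => ?_
        have h1 : (1:ℝ) ≤ (f x : ℝ) := Sk_ge_one hf' x hx
        have h2 := hgr' x hx
        dsimp only; nlinarith
    · refine Or.inr fun x hx => ?_
      have h1 := hgr x hx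
      have h2 : (1:ℝ) ≤ (g x : ℝ) := Sk_ge_one hg' x hx
      dsimp only; nlinarith
  | @pow f g hf' hg' ihf ihg =>
    rcases ihf with ⟨n, hn, he⟩ | hgr
    · rcases Nat.eq_or_lt_of_le hn with h1 | h1
      · refine Or.inl ⟨1, le_refl _, fun x => ?_⟩
        dsimp only
        rw [he x, ← h1]
        push_cast
        exact Real.one_rpow _
      · -- n ≥ 2
        rcases ihg with ⟨m, hm, he'⟩ | hgr'
        · refine Or.inl ⟨n ^ m, Nat.one_le_iff_ne_zero.2 (pow_ne_zero _ (by omega)), fun x => ?_⟩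
          dsimp only
          rw [he x, he' x, Real.rpow_natCast]
          push_cast
          ring
        · refine Or.inr fun x hx => ?_
          dsimp only
          rw [he x]
          have hgx : (x:ℝ) ≤ (g x : ℝ) := hgr' x hx
          refine le_of_lt ?_
          calc (x:ℝ) < (2:ℝ) ^ (x:ℝ) := lt_two_rpow _ (by linarith)
            _ ≤ (n:ℝ) ^ (x:ℝ) := Real.rpow_le_rpow (by norm_num) (by exact_mod_cast h1) (by linarith)
            _ ≤ (n:ℝ) ^ (g x : ℝ) := Real.rpow_le_rpow_of_exponent_le (by exact_mod_cast h1.le) hgx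
    · rcases ihg with ⟨m, hm, he'⟩ | hgr'
      · refine Or.inr fun x hx => ?_
        dsimp only
        rw [he' x]
        have h1 := hgr x hx
        calc (x:ℝ) ≤ (f x : ℝ) := h1
          _ = (f x : ℝ) ^ ((1:ℕ):ℝ) := by rw [Nat.cast_one, Real.rpow_one]
          _ ≤ (f x : ℝ) ^ ((m:ℕ):ℝ) := Real.rpow_le_rpow_of_exponent_le (by linarith)
              (by exact_mod_cast hm)
      · refine Or.inr fun x hx => ?_
        dsimp only
        have h1 := hgr x hx
        have h2 := hgr' x hx
        calc (x:ℝ) ≤ (f x : ℝ) := h1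
          _ = (f x : ℝ) ^ (1:ℝ) := (Real.rpow_one _).symm
          _ ≤ (f x : ℝ) ^ (g x : ℝ) := Real.rpow_le_rpow_of_exponent_le (by linarith) (by linarith)

-- chunk D: bounds
def SL (L : List Mono) : ℕ := (L.map (fun t => t.1)).sum
def KL (L : List Mono) : ℕ := (L.map (fun t => t.2.1)).foldr max 0
def ML (L : List Mono) : ℕ := (L.map (fun t => t.2.2)).foldr max 1

lemma le_foldr_max {l : List ℕ} {a : ℕ} (h : a ∈ l) (b : ℕ) : a ≤ l.foldr max b := by
  induction l with
  | nil => simp at h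
  | cons c l ih =>
    rcases List.mem_cons.1 h with rfl | h'
    · exact le_max_left _ _
    · exact le_trans (ih h') (le_max_right _ _)

lemma foldr_max_attained (l : List ℕ) (b : ℕ) : l.foldr max b = b ∨ ∃ a ∈ l, l.foldr max b = a := by
  induction l with
  | nil => exact Or.inl rfl
  | cons c l ih =>
    rcases le_total c (l.foldr max b) with h | h
    · rcases ih with h' | ⟨a, ha, h'⟩
      · simp only [List.foldr_cons, max_eq_right h]
        exact Or.inl h'
      · exact Or.inr ⟨a, List.mem_cons_of_mem _ ha, by simp only [List.foldr_cons, max_eq_right h]; exact h'⟩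
    · exact Or.inr ⟨c, List.mem_cons_self, by simp only [List.foldr_cons, max_eq_left h]⟩

lemma foldr_max_ge (l : List ℕ) (b : ℕ) : b ≤ l.foldr max b := by
  induction l with
  | nil => exact le_refl _
  | cons c l ih => exact le_trans ih (le_max_right _ _)

lemma ML_pos (L : List Mono) : 1 ≤ ML L := foldr_max_ge _ 1

lemma ML_attained {L : List Mono} (hne : L ≠ []) (hv : validL L) :
    ∃ t ∈ L, t.2.2 = ML L := by
  rcases foldr_max_attained (L.map (fun t => t.2.2)) 1 with h | ⟨a, ha, h⟩
  · obtain ⟨t, l, rfl⟩ := List.exists_cons_of_ne_nil hne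
    refine ⟨t, List.mem_cons_self, ?_⟩
    have h1 := (hv t (List.mem_cons_self)).2
    have h2 : t.2.2 ≤ ML (t :: l) := le_foldr_max (by simp) 1
    unfold ML at *
    omega
  · obtain ⟨t, ht, rfl⟩ := List.mem_map.1 ha
    exact ⟨t, ht, h.symm⟩

lemma evalL_upper {L : List Mono} (hv : validL L) (x : Rpos) (hx : 1 ≤ (x:ℝ)) :
    evalL L x ≤ (SL L : ℝ) * (x:ℝ) ^ (KL L) * ((ML L : ℝ)) ^ (x:ℝ) := by
  have hx0 : (0:ℝ) < (x:ℝ) := x.2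
  have key : ∀ t ∈ L, term x t ≤ (t.1 : ℝ) * ((x:ℝ) ^ (KL L) * ((ML L : ℝ)) ^ (x:ℝ)) := by
    intro t ht
    have h1 : (x:ℝ) ^ t.2.1 ≤ (x:ℝ) ^ (KL L) :=
      pow_le_pow_right₀ hx (le_foldr_max (l := L.map fun t => t.2.1)
        (List.mem_map_of_mem ht) 0)
    have hml : t.2.2 ≤ ML L := le_foldr_max (l := L.map fun s => s.2.2)
      (List.mem_map_of_mem ht) 1
    have h2 : ((t.2.2:ℕ):ℝ) ^ (x:ℝ) ≤ ((ML L : ℕ):ℝ) ^ (x:ℝ) :=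
      Real.rpow_le_rpow (Nat.cast_nonneg _) (by exact_mod_cast hml) (le_of_lt hx0)
    have ha : (0:ℝ) ≤ (t.1:ℝ) := Nat.cast_nonneg _
    have hp1 : (0:ℝ) ≤ (x:ℝ) ^ t.2.1 := le_of_lt (pow_pos hx0 _)
    have hp2 : (0:ℝ) ≤ ((t.2.2:ℕ):ℝ) ^ (x:ℝ) := le_of_lt (Real.rpow_pos_of_pos
      (by exact_mod_cast Nat.lt_of_lt_of_le Nat.zero_lt_one (hv t ht).2) _)
    unfold term
    calc (t.1:ℝ) * (x:ℝ) ^ t.2.1 * ((t.2.2:ℕ):ℝ) ^ (x:ℝ)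
        ≤ (t.1:ℝ) * (x:ℝ) ^ (KL L) * ((t.2.2:ℕ):ℝ) ^ (x:ℝ) := by
          apply mul_le_mul_of_nonneg_right _ hp2
          exact mul_le_mul_of_nonneg_left h1 ha
      _ ≤ (t.1:ℝ) * (x:ℝ) ^ (KL L) * ((ML L:ℕ):ℝ) ^ (x:ℝ) := by
          apply mul_le_mul_of_nonneg_left h2
          positivity
      _ = (t.1:ℝ) * ((x:ℝ) ^ (KL L) * ((ML L:ℕ):ℝ) ^ (x:ℝ)) := by ring
  calc evalL L x = (L.map (term x)).sum := rfl
    _ ≤ (L.map (fun t => (t.1:ℝ) * ((x:ℝ) ^ (KL L) * ((ML L:ℕ):ℝ) ^ (x:ℝ)))).sum := by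
        apply List.sum_le_sum
        intro t ht
        exact key t ht
    _ = (SL L : ℝ) * (x:ℝ) ^ (KL L) * ((ML L:ℕ):ℝ) ^ (x:ℝ) := by
        have hS : ((SL L : ℕ):ℝ) = (L.map fun t => (t.1:ℝ)).sum := by
          unfold SL
          rw [Nat.cast_list_sum, List.map_map]
          rfl
        rw [List.sum_map_mul_right, ← hS]
        ring

lemma evalL_lower_base {L : List Mono} (hne : L ≠ []) (hv : validL L) (x : Rpos)
    (hx : 1 ≤ (x:ℝ)) : ((ML L : ℕ):ℝ) ^ (x:ℝ) ≤ evalL L x := by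
  obtain ⟨t, ht, htm⟩ := ML_attained hne hv
  refine le_trans ?_ (term_le_evalL hv ht x)
  unfold term
  rw [htm]
  have h1 : (1:ℝ) ≤ (t.1:ℝ) := by exact_mod_cast (hv t ht).1
  have h2 : (1:ℝ) ≤ (x:ℝ) ^ t.2.1 := one_le_pow₀ hx
  have h4 : (0:ℝ) < ((ML L:ℕ):ℝ) ^ (x:ℝ) := Real.rpow_pos_of_pos
    (by exact_mod_cast ML_pos L) (x:ℝ)
  have h3 : (1:ℝ) ≤ (t.1:ℝ) * (x:ℝ) ^ t.2.1 := by nlinarith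
  nlinarith [mul_le_mul_of_nonneg_right h3 (le_of_lt h4)]

-- chunk E: main EP lemma
lemma term_ge_base {t : Mono} (h1 : 1 ≤ t.1) (x : Rpos) (hx : 1 ≤ (x:ℝ)) :
    ((t.2.2 : ℕ):ℝ) ^ (x:ℝ) ≤ term x t := by
  have h2 : (1:ℝ) ≤ (t.1:ℝ) * (x:ℝ) ^ t.2.1 := by
    have : (1:ℝ) ≤ (t.1:ℝ) := by exact_mod_cast h1
    have := one_le_pow₀ (n := t.2.1) hx
    nlinarith
  have h3 : (0:ℝ) ≤ ((t.2.2:ℕ):ℝ) ^ (x:ℝ) := Real.rpow_nonneg (Nat.cast_nonneg _) _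
  unfold term
  nlinarith

lemma term_ge_pow {t : Mono} (h1 : 1 ≤ t.1) (h2 : 1 ≤ t.2.2) (x : Rpos) (hx : 1 ≤ (x:ℝ)) :
    (x:ℝ) ^ t.2.1 ≤ term x t := by
  have ha : (1:ℝ) ≤ (t.1:ℝ) := by exact_mod_cast h1
  have hb : (1:ℝ) ≤ ((t.2.2:ℕ):ℝ) ^ (x:ℝ) := by
    calc (1:ℝ) = ((t.2.2:ℕ):ℝ) ^ (0:ℝ) := (Real.rpow_zero _).symm
      _ ≤ _ := Real.rpow_le_rpow_of_exponent_le (by exact_mod_cast h2) (by positivity)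
  have hp : (0:ℝ) < (x:ℝ) ^ t.2.1 := pow_pos (lt_of_lt_of_le one_pos hx) _
  have hc : (1:ℝ) ≤ (t.1:ℝ) * ((t.2.2:ℕ):ℝ) ^ (x:ℝ) := by nlinarith
  unfold term
  nlinarith [mul_le_mul_of_nonneg_right hc hp.le]

lemma ev_xx_lt_two_two : ∀ᶠ y in (@atTop ℝ _), y ^ y < (2:ℝ) ^ ((2:ℝ) ^ y) := by
  have hl : (0:ℝ) < Real.log 2 := Real.log_pos one_lt_two
  filter_upwards [poly_lt_rpow ((Real.log 2)⁻¹ + 1) 2 one_lt_two,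
    eventually_ge_atTop (1:ℝ)] with y h1 hy1
  have hy0 : (0:ℝ) < y := lt_of_lt_of_le one_pos hy1
  have hlogy : Real.log y ≤ y := by
    have := Real.log_le_sub_one_of_pos hy0
    linarith
  have hy2 : (0:ℝ) < y ^ 2 := by positivity
  have h2 : y ^ 2 < (2:ℝ) ^ y * Real.log 2 := by
    have heq : y ^ 2 = ((Real.log 2)⁻¹ * y ^ 2) * Real.log 2 := by field_simp
    nlinarith
  have h3 : Real.log y * y < Real.log 2 * (2:ℝ) ^ y := by
    have : Real.log y * y ≤ y ^ 2 := by nlinarith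
    linarith
  rw [Real.rpow_def_of_pos hy0, Real.rpow_def_of_pos two_pos ((2:ℝ) ^ y)]
  exact Real.exp_lt_exp.mpr h3

lemma ev_xx_lt_two_sq : ∀ᶠ y in (@atTop ℝ _), y ^ y < (2:ℝ) ^ (y * y) := by
  have hl : (0:ℝ) < Real.log 2 := Real.log_pos one_lt_two
  filter_upwards [log_lt_mul hl, eventually_gt_atTop (0:ℝ)] with y h1 hy0
  have h3 : Real.log y * y < Real.log 2 * (y * y) := by nlinarith
  rw [Real.rpow_def_of_pos hy0, Real.rpow_def_of_pos two_pos (y * y)]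
  exact Real.exp_lt_exp.mpr h3

lemma linear_of_small {L : List Mono} (hsmall : ∀ t ∈ L, t.2.1 ≤ 1 ∧ t.2.2 = 1) :
    ∃ A B : ℕ, ∀ x : Rpos, evalL L x = (A:ℝ) * (x:ℝ) + (B:ℝ) := by
  induction L with
  | nil => exact ⟨0, 0, fun x => by simp [evalL]⟩
  | cons t l ih =>
    obtain ⟨A, B, hAB⟩ := ih (fun s hs => hsmall s (List.mem_cons_of_mem _ hs))
    obtain ⟨hk, hm⟩ := hsmall t (List.mem_cons_self)
    have hterm : ∀ x : Rpos, term x t = (t.1:ℝ) * (x:ℝ) ^ t.2.1 := by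
      intro x
      unfold term
      rw [hm]
      simp [Real.one_rpow]
    interval_cases h : t.2.1
    · refine ⟨A, B + t.1, fun x => ?_⟩
      simp only [evalL, List.map_cons, List.sum_cons] at *
      rw [hterm x, hAB x]
      push_cast
      simp [h]
      ring
    · refine ⟨A + t.1, B, fun x => ?_⟩
      simp only [evalL, List.map_cons, List.sum_cons] at *
      rw [hterm x, hAB x]
      push_cast
      simp [h]
      ring

lemma Sk_EP {f : Rpos → Rpos} (hf : Sk f) : SkLt f xPowX → EP f := by
  induction hf with
  | one =>
    intro _
    refine ⟨[(1,0,1)], by simp, by intro t ht; simp at ht; simp [ht], fun x => ?_⟩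
    simp [evalL, term, Real.one_rpow]
  | id =>
    intro _
    refine ⟨[(1,1,1)], by simp, by intro t ht; simp at ht; simp [ht], fun x => ?_⟩
    simp [evalL, term, Real.one_rpow]
  | @add f g hf hg ihf ihg =>
    intro hlt
    have hflt : SkLt f xPowX := by
      filter_upwards [hlt] with x hx
      have := (g x).2
      linarith
    have hglt : SkLt g xPowX := by
      filter_upwards [hlt] with x hx
      have := (f x).2
      linarith
    obtain ⟨L1, hne1, hv1, he1⟩ := ihf hflt
    obtain ⟨L2, hne2, hv2, he2⟩ := ihg hglt
    refine ⟨L1 ++ L2, by simp [hne1], ?_, fun x => ?_⟩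
    · intro t ht
      rcases List.mem_append.1 ht with h | h
      exacts [hv1 t h, hv2 t h]
    · have : evalL (L1 ++ L2) x = evalL L1 x + evalL L2 x := by
        simp [evalL]
      rw [Rpos_coe_mk, this, ← he1 x, ← he2 x]
  | @mul f g hf hg ihf ihg =>
    intro hlt
    have hflt : SkLt f xPowX := by
      filter_upwards [hlt, ev_one_le] with x hx hx1
      have h1 : (1:ℝ) ≤ (g x : ℝ) := Sk_ge_one hg x hx1
      have h2 : (0:ℝ) < (f x : ℝ) := (f x).2
      nlinarith
    have hglt : SkLt g xPowX := by
      filter_upwards [hlt, ev_one_le] with x hx hx1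
      have h1 : (1:ℝ) ≤ (f x : ℝ) := Sk_ge_one hf x hx1
      have h2 : (0:ℝ) < (g x : ℝ) := (g x).2
      nlinarith
    obtain ⟨L1, hne1, hv1, he1⟩ := ihf hflt
    obtain ⟨L2, hne2, hv2, he2⟩ := ihg hglt
    refine ⟨mulL L1 L2, mulL_ne_nil hne1 hne2, mulL_valid hv1 hv2, fun x => ?_⟩
    rw [evalL_mul, ← he1 x, ← he2 x]
  | @pow f g hf hg ihf ihg =>
    intro hlt
    rcases Sk_dichotomy hf with ⟨n, hn, he⟩ | hfbig
    · rcases Nat.eq_or_lt_of_le hn with h1 | h1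
      · -- n = 1
        refine ⟨[(1,0,1)], by simp, by intro t ht; simp at ht; simp [ht], fun x => ?_⟩
        simp only [evalL, term, List.map_cons, List.map_nil, List.sum_cons, List.sum_nil]
        rw [he x, ← h1]
        push_cast
        rw [Real.one_rpow]
        norm_num
      · rcases Sk_dichotomy hg with ⟨m, hm, he'⟩ | hgbig
        · -- f const n, g const m : value n^m
          refine ⟨[(n ^ m, 0, 1)], by simp, ?_, fun x => ?_⟩
          · intro t ht
            simp at ht
            subst ht
            exact ⟨Nat.one_le_iff_ne_zero.2 (pow_ne_zero _ (by omega)), le_refl _⟩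
          · simp only [evalL, term, List.map_cons, List.map_nil, List.sum_cons, List.sum_nil]
            rw [he x, he' x]
            push_cast
            rw [Real.one_rpow, Real.rpow_natCast]
            push_cast
            ring
        · -- f const n ≥ 2, g nonconst
          have hn2 : (2:ℝ) ≤ (n:ℝ) := by exact_mod_cast h1
          have hglt : SkLt g xPowX := by
            filter_upwards [hlt, ev_one_le] with x hx hx1
            have hg1 : (1:ℝ) ≤ (g x : ℝ) := le_trans hx1 (hgbig x hx1)
            have h2 : (g x : ℝ) < (n:ℝ) ^ (g x : ℝ) :=
              lt_of_lt_of_le (lt_two_rpow _ (by linarith))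
                (Real.rpow_le_rpow (by norm_num) hn2 (by linarith))
            rw [he x] at hx
            linarith
          obtain ⟨L, hne, hv, heq⟩ := ihg hglt
          have hsub : ∀ t ∈ L, t.2.1 ≤ 1 ∧ t.2.2 = 1 := by
            intro t ht
            have hval := hv t ht
            by_contra hcon
            rw [not_and_or] at hcon
            have hbad : (∀ x : Rpos, 1 ≤ (x:ℝ) → (2:ℝ) ^ ((2:ℝ) ^ (x:ℝ)) ≤ (n:ℝ) ^ (g x : ℝ))
                ∨ (∀ x : Rpos, 1 ≤ (x:ℝ) → (2:ℝ) ^ ((x:ℝ) * (x:ℝ)) ≤ (n:ℝ) ^ (g x : ℝ)) := by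
              have hgterm : ∀ x : Rpos, term x t ≤ (g x : ℝ) := fun x =>
                (heq x) ▸ term_le_evalL hv ht x
              rcases Nat.lt_or_ge t.2.2 2 with hm2 | hm2
              · -- m = 1, so k ≥ 2
                have hm1 : t.2.2 = 1 := by omega
                have hk2 : 2 ≤ t.2.1 := by
                  rcases hcon with h | h
                  · omega
                  · exact absurd hm1 h
                refine Or.inr fun x hx1 => ?_
                have h3 : (x:ℝ) * (x:ℝ) ≤ (g x : ℝ) := by
                  have h4 : (x:ℝ) * (x:ℝ) ≤ (x:ℝ) ^ t.2.1 := by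
                    calc (x:ℝ) * (x:ℝ) = (x:ℝ) ^ 2 := (sq _).symm
                      _ ≤ (x:ℝ) ^ t.2.1 := pow_le_pow_right₀ hx1 hk2
                  exact le_trans (le_trans h4 (term_ge_pow hval.1 hval.2 x hx1)) (hgterm x)
                calc (2:ℝ) ^ ((x:ℝ) * (x:ℝ)) ≤ (2:ℝ) ^ (g x : ℝ) :=
                      Real.rpow_le_rpow_of_exponent_le one_le_two h3
                  _ ≤ (n:ℝ) ^ (g x : ℝ) := Real.rpow_le_rpow (by norm_num) hn2
                      (le_trans (by nlinarith) h3)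
              · -- m ≥ 2
                refine Or.inl fun x hx1 => ?_
                have h3 : (2:ℝ) ^ (x:ℝ) ≤ (g x : ℝ) := by
                  have h4 : (2:ℝ) ^ (x:ℝ) ≤ ((t.2.2:ℕ):ℝ) ^ (x:ℝ) :=
                    Real.rpow_le_rpow (by norm_num) (by exact_mod_cast hm2) (by positivity)
                  exact le_trans (le_trans h4 (term_ge_base hval.1 x hx1)) (hgterm x)
                have h0 : (0:ℝ) < (2:ℝ) ^ (x:ℝ) := Real.rpow_pos_of_pos two_pos _
                calc (2:ℝ) ^ ((2:ℝ) ^ (x:ℝ)) ≤ (2:ℝ) ^ (g x : ℝ) :=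
                      Real.rpow_le_rpow_of_exponent_le one_le_two h3
                  _ ≤ (n:ℝ) ^ (g x : ℝ) := Real.rpow_le_rpow (by norm_num) hn2 (by linarith)
            rcases hbad with hbad | hbad
            · obtain ⟨x, hx1, hanal, hx⟩ :=
                ((ev_one_le.and ((ev_transfer ev_xx_lt_two_two).and hlt)).exists)
              have hx' : (f x:ℝ) ^ (g x:ℝ) < (xPowX x:ℝ) := hx
              rw [he x] at hx'
              exact absurd (lt_of_le_of_lt (hbad x hx1) hx') (not_lt.2 hanal.le)
            · obtain ⟨x, hx1, hanal, hx⟩ :=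
                ((ev_one_le.and ((ev_transfer ev_xx_lt_two_sq).and hlt)).exists)
              have hx' : (f x:ℝ) ^ (g x:ℝ) < (xPowX x:ℝ) := hx
              rw [he x] at hx'
              exact absurd (lt_of_le_of_lt (hbad x hx1) hx') (not_lt.2 hanal.le)
          obtain ⟨A, B, hAB⟩ := linear_of_small hsub
          refine ⟨[(n ^ B, 0, n ^ A)], by simp, ?_, fun x => ?_⟩
          · intro t ht
            simp at ht
            subst ht
            exact ⟨Nat.one_le_iff_ne_zero.2 (pow_ne_zero _ (by omega)),
              Nat.one_le_iff_ne_zero.2 (pow_ne_zero _ (by omega))⟩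
          · simp only [evalL, term, List.map_cons, List.map_nil, List.sum_cons, List.sum_nil]
            rw [he x, heq x, hAB x]
            have hn0 : (0:ℝ) < (n:ℝ) := by linarith
            rw [Real.rpow_add hn0]
            push_cast
            rw [Real.rpow_natCast (n:ℝ) B, ← Real.rpow_natCast (n:ℝ) A, ← Real.rpow_mul hn0.le]
            rw [pow_zero]
            ring
    · rcases Sk_dichotomy hg with ⟨m, hm, he'⟩ | hgbig
      · -- g const m
        have hflt : SkLt f xPowX := by
          filter_upwards [hlt, ev_one_le] with x hx hx1
          have h1 : (1:ℝ) ≤ (f x:ℝ) := Sk_ge_one hf x hx1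
          have h2 : (f x:ℝ) ≤ (f x:ℝ) ^ (g x : ℝ) := by
            calc (f x:ℝ) = (f x:ℝ) ^ (1:ℝ) := (Real.rpow_one _).symm
              _ ≤ _ := Real.rpow_le_rpow_of_exponent_le h1
                  (by rw [he' x]; exact_mod_cast hm)
          linarith
        obtain ⟨L, hne, hv, heq⟩ := ihf hflt
        have key : ∀ j : ℕ, 1 ≤ j → ∃ L', L' ≠ [] ∧ validL L' ∧
            ∀ x, (f x:ℝ) ^ (j:ℕ) = evalL L' x := by
          intro j hj
          induction j with
          | zero => omega
          | succ i ih =>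
            rcases Nat.eq_or_lt_of_le hj with h | h
            · exact ⟨L, hne, hv, fun x => by rw [← h, pow_one]; exact heq x⟩
            · have hi : 1 ≤ i := by omega
              obtain ⟨L', hne', hv', heq'⟩ := ih hi
              exact ⟨mulL L' L, mulL_ne_nil hne' hne, mulL_valid hv' hv, fun x => by
                rw [evalL_mul, ← heq' x, ← heq x, pow_succ]⟩
        obtain ⟨L', hne', hv', heq'⟩ := key m hm
        refine ⟨L', hne', hv', fun x => ?_⟩
        simp only
        rw [he' x, Real.rpow_natCast, heq' x]
      · -- both nonconst : contradiction
        exfalso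
        have hbig : ∀ᶠ x : Rpos in atTop, (xPowX x : ℝ) ≤ (f x:ℝ) ^ (g x : ℝ) := by
          filter_upwards [ev_one_le] with x hx1
          have h1 := hfbig x hx1
          have h2 := hgbig x hx1
          calc (xPowX x : ℝ) = (x:ℝ) ^ (x:ℝ) := rfl
            _ ≤ (f x:ℝ) ^ (x:ℝ) := Real.rpow_le_rpow (le_of_lt x.2) h1 (by linarith)
            _ ≤ (f x:ℝ) ^ (g x:ℝ) := Real.rpow_le_rpow_of_exponent_le (by linarith) h2
        obtain ⟨x, h1, h2⟩ := (hbig.and hlt).exists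
        exact absurd (lt_of_le_of_lt h1 h2) (lt_irrefl _)

-- chunk F: final helpers
lemma pt_bound {p : ℕ} (hp2 : 2 ≤ p) (C : ℝ) (K : ℕ) :
    ∀ᶠ x : Rpos in atTop, C * (x:ℝ) ^ K * ((p - 1 : ℕ):ℝ) ^ (x:ℝ) < (p:ℝ) ^ (x:ℝ) := by
  have hp0 : (0:ℝ) < (p:ℝ) := by exact_mod_cast Nat.lt_of_lt_of_le Nat.zero_lt_one (by omega)
  have hq0 : (0:ℝ) ≤ ((p - 1 : ℕ):ℝ) := Nat.cast_nonneg _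
  set r : ℝ := ((p - 1 : ℕ):ℝ) / (p:ℝ) with hr
  have hr0 : 0 ≤ r := div_nonneg hq0 hp0.le
  have hr1 : r < 1 := by
    rw [hr, div_lt_one hp0]
    exact_mod_cast Nat.sub_lt (by omega) Nat.zero_lt_one
  filter_upwards [ev_transfer (decay_lt_one C K hr0 hr1)] with x hx
  have hpx : (0:ℝ) < (p:ℝ) ^ (x:ℝ) := Real.rpow_pos_of_pos hp0 _
  have hdiv : r ^ (x:ℝ) = ((p - 1 : ℕ):ℝ) ^ (x:ℝ) / (p:ℝ) ^ (x:ℝ) := Real.div_rpow hq0 hp0.le _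
  have := mul_lt_mul_of_pos_right hx hpx
  rw [one_mul] at this
  calc C * (x:ℝ) ^ K * ((p - 1 : ℕ):ℝ) ^ (x:ℝ)
      = C * (x:ℝ) ^ K * (r ^ (x:ℝ)) * (p:ℝ) ^ (x:ℝ) := by
        rw [hdiv]
        field_simp
    _ < (p:ℝ) ^ (x:ℝ) := this

lemma EP_ML_le {g : Rpos → Rpos} {L : List Mono} (hne : L ≠ []) (hv : validL L)
    (heq : ∀ x, (g x : ℝ) = evalL L x) {p : ℕ} (hp2 : 2 ≤ p)
    (hlg : ∀ᶠ x : Rpos in atTop, (g x : ℝ) < (p:ℝ) ^ (x:ℝ)) : ML L ≤ p - 1 := by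
  by_contra hcon
  have hml : p ≤ ML L := by omega
  have hlow : ∀ x : Rpos, 1 ≤ (x:ℝ) → (p:ℝ) ^ (x:ℝ) ≤ (g x : ℝ) := by
    intro x hx
    calc (p:ℝ) ^ (x:ℝ) ≤ ((ML L : ℕ):ℝ) ^ (x:ℝ) :=
        Real.rpow_le_rpow (Nat.cast_nonneg _) (by exact_mod_cast hml) (by positivity)
      _ ≤ evalL L x := evalL_lower_base hne hv x hx
      _ = (g x : ℝ) := (heq x).symm
  obtain ⟨x, hx1, hx2⟩ := (ev_one_le.and hlg).exists
  exact absurd (lt_of_le_of_lt (hlow x hx1) hx2) (lt_irrefl _)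

lemma oneFun_component : IsComponent oneFun := by
  refine ⟨Sk.one, ?_, ?_⟩
  · rintro ⟨g, h, hg, hh, hlg, hlh, heqf⟩
    obtain ⟨x, hx1, hx2⟩ := (ev_one_le.and hlg).exists
    have : (g x : ℝ) < 1 := hx2
    have := Sk_ge_one hg x hx1
    linarith
  · rintro ⟨g, h, hg, hh, hlg, hlh, heqf⟩
    obtain ⟨x, hx1, hx2⟩ := (ev_one_le.and hlg).exists
    have : (g x : ℝ) < 1 := hx2
    have := Sk_ge_one hg x hx1
    linarith

lemma xFun_component : IsComponent xFun := by
  refine ⟨Sk.id, ?_, ?_⟩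
  · rintro ⟨g, h, hg, hh, hlg, hlh, heqf⟩
    have hgc : ∃ n : ℕ, 1 ≤ n ∧ ∀ x, (g x : ℝ) = n := by
      rcases Sk_dichotomy hg with h' | h'
      · exact h'
      · exfalso
        obtain ⟨x, hx1, hx2⟩ := (ev_one_le.and hlg).exists
        have : (g x : ℝ) < (x:ℝ) := hx2
        exact absurd (lt_of_le_of_lt (h' x hx1) this) (lt_irrefl _)
    have hhc : ∃ n : ℕ, 1 ≤ n ∧ ∀ x, (h x : ℝ) = n := by
      rcases Sk_dichotomy hh with h' | h'
      · exact h'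
      · exfalso
        obtain ⟨x, hx1, hx2⟩ := (ev_one_le.and hlh).exists
        have : (h x : ℝ) < (x:ℝ) := hx2
        exact absurd (lt_of_le_of_lt (h' x hx1) this) (lt_irrefl _)
    obtain ⟨n, hn, hgn⟩ := hgc
    obtain ⟨m, hm, hhm⟩ := hhc
    have hval : ∀ x : Rpos, (x:ℝ) = (n:ℝ) + (m:ℝ) := by
      intro x
      have := congrArg Subtype.val (congrFun heqf x)
      rw [← hgn x, ← hhm x]
      exact this
    have h1 := hval ⟨(n:ℝ) + (m:ℝ) + 1, by positivity⟩
    simp only [Rpos_coe_mk] at h1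
    linarith
  · rintro ⟨g, h, hg, hh, hlg, hlh, heqf⟩
    have hgc : ∃ n : ℕ, 1 ≤ n ∧ ∀ x, (g x : ℝ) = n := by
      rcases Sk_dichotomy hg with h' | h'
      · exact h'
      · exfalso
        obtain ⟨x, hx1, hx2⟩ := (ev_one_le.and hlg).exists
        have : (g x : ℝ) < (x:ℝ) := hx2
        exact absurd (lt_of_le_of_lt (h' x hx1) this) (lt_irrefl _)
    have hhc : ∃ n : ℕ, 1 ≤ n ∧ ∀ x, (h x : ℝ) = n := by
      rcases Sk_dichotomy hh with h' | h'
      · exact h'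
      · exfalso
        obtain ⟨x, hx1, hx2⟩ := (ev_one_le.and hlh).exists
        have : (h x : ℝ) < (x:ℝ) := hx2
        exact absurd (lt_of_le_of_lt (h' x hx1) this) (lt_irrefl _)
    obtain ⟨n, hn, hgn⟩ := hgc
    obtain ⟨m, hm, hhm⟩ := hhc
    have hval : ∀ x : Rpos, (x:ℝ) = (n:ℝ) * (m:ℝ) := by
      intro x
      have := congrArg Subtype.val (congrFun heqf x)
      rw [← hgn x, ← hhm x]
      exact this
    have h1 := hval ⟨(n:ℝ) * (m:ℝ) + 1, by positivity⟩
    simp only [Rpos_coe_mk] at h1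
    linarith

-- chunk G: prime powers
lemma pPow_lt_xPowX {p : ℕ} (hp2 : 2 ≤ p) :
    SkLt (fun x => (⟨(p:ℝ) ^ (x:ℝ), Real.rpow_pos_of_pos (by exact_mod_cast Nat.lt_of_lt_of_le Nat.zero_lt_one (by omega)) _⟩ : Rpos)) xPowX := by
  filter_upwards [ev_transfer (eventually_gt_atTop (p:ℝ))] with x hx
  have hx0 : (0:ℝ) < (x:ℝ) := x.2
  exact Real.rpow_lt_rpow (Nat.cast_nonneg _) hx hx0

lemma pPow_Sk {p : ℕ} (hp2 : 2 ≤ p) :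
    Sk (fun x => (⟨(p:ℝ) ^ (x:ℝ), Real.rpow_pos_of_pos (by exact_mod_cast Nat.lt_of_lt_of_le Nat.zero_lt_one (by omega)) _⟩ : Rpos)) := by
  exact Sk_of_eq (Sk.pow (Sk_const (by omega : 1 ≤ p)) Sk.id) (fun x => rfl)

lemma pPow_component {p : ℕ} (hp : p.Prime) :
    IsComponent (fun x => (⟨(p:ℝ) ^ (x:ℝ), Real.rpow_pos_of_pos (by exact_mod_cast hp.pos) _⟩ : Rpos)) := by
  have hp2 : 2 ≤ p := hp.two_le
  have hxlt := pPow_lt_xPowX hp2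
  refine ⟨Sk_of_eq (pPow_Sk hp2) (fun x => rfl), ?_, ?_⟩
  · rintro ⟨g, h, hg, hh, hlg, hlh, heqf⟩
    have hlg' : ∀ᶠ x : Rpos in atTop, (g x : ℝ) < (p:ℝ) ^ (x:ℝ) := hlg
    have hlh' : ∀ᶠ x : Rpos in atTop, (h x : ℝ) < (p:ℝ) ^ (x:ℝ) := hlh
    have hglt : SkLt g xPowX := by
      filter_upwards [hlg', pPow_lt_xPowX hp2] with x h1 h2
      exact lt_trans h1 h2
    have hhlt : SkLt h xPowX := by
      filter_upwards [hlh', pPow_lt_xPowX hp2] with x h1 h2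
      exact lt_trans h1 h2
    obtain ⟨L1, hne1, hv1, he1⟩ := Sk_EP hg hglt
    obtain ⟨L2, hne2, hv2, he2⟩ := Sk_EP hh hhlt
    have hm1 : ML L1 ≤ p - 1 := EP_ML_le hne1 hv1 he1 hp2 hlg'
    have hm2 : ML L2 ≤ p - 1 := EP_ML_le hne2 hv2 he2 hp2 hlh'
    have hval : ∀ x : Rpos, (p:ℝ) ^ (x:ℝ) = (g x : ℝ) + (h x : ℝ) :=
      fun x => congrArg Subtype.val (congrFun heqf x)
    set K := KL L1 + KL L2 with hK
    set C := ((SL L1 : ℝ) + (SL L2 : ℝ)) with hC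
    have hup : ∀ x : Rpos, 1 ≤ (x:ℝ) →
        (g x : ℝ) + (h x : ℝ) ≤ C * (x:ℝ) ^ K * ((p - 1 : ℕ):ℝ) ^ (x:ℝ) := by
      intro x hx
      have hq0 : (0:ℝ) ≤ ((p - 1 : ℕ):ℝ) := Nat.cast_nonneg _
      have hb : ∀ (L : List Mono), validL L → ML L ≤ p - 1 → KL L ≤ K →
          evalL L x ≤ (SL L : ℝ) * (x:ℝ) ^ K * ((p - 1 : ℕ):ℝ) ^ (x:ℝ) := by
        intro L hv hml hkl
        calc evalL L x ≤ (SL L : ℝ) * (x:ℝ) ^ (KL L) * ((ML L : ℕ):ℝ) ^ (x:ℝ) :=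
              evalL_upper hv x hx
          _ ≤ (SL L : ℝ) * (x:ℝ) ^ K * ((p - 1 : ℕ):ℝ) ^ (x:ℝ) := by
              have h1 : (x:ℝ) ^ (KL L) ≤ (x:ℝ) ^ K := pow_le_pow_right₀ hx hkl
              have h2 : ((ML L : ℕ):ℝ) ^ (x:ℝ) ≤ ((p - 1 : ℕ):ℝ) ^ (x:ℝ) :=
                Real.rpow_le_rpow (Nat.cast_nonneg _) (by exact_mod_cast hml) (by positivity)
              have hs : (0:ℝ) ≤ (SL L : ℝ) := Nat.cast_nonneg _
              have hx0 : (0:ℝ) < (x:ℝ) := x.2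
              have hmlp : (0:ℝ) ≤ ((ML L : ℕ):ℝ) ^ (x:ℝ) := Real.rpow_nonneg (Nat.cast_nonneg _) _
              calc (SL L : ℝ) * (x:ℝ) ^ (KL L) * ((ML L : ℕ):ℝ) ^ (x:ℝ)
                  ≤ (SL L : ℝ) * (x:ℝ) ^ K * ((ML L : ℕ):ℝ) ^ (x:ℝ) := by
                    apply mul_le_mul_of_nonneg_right _ hmlp
                    exact mul_le_mul_of_nonneg_left h1 hs
                _ ≤ (SL L : ℝ) * (x:ℝ) ^ K * ((p - 1 : ℕ):ℝ) ^ (x:ℝ) := by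
                    apply mul_le_mul_of_nonneg_left h2
                    positivity
      have hbg := hb L1 hv1 hm1 (by omega)
      have hbh := hb L2 hv2 hm2 (by omega)
      rw [he1 x, he2 x]
      rw [hC]
      nlinarith [hbg, hbh]
    obtain ⟨x, hx1, hx2⟩ := (ev_one_le.and (pt_bound hp2 C K)).exists
    have := lt_of_le_of_lt (hup x hx1) hx2
    rw [← hval x] at this
    exact absurd this (lt_irrefl _)
  · rintro ⟨g, h, hg, hh, hlg, hlh, heqf⟩
    have hlg' : ∀ᶠ x : Rpos in atTop, (g x : ℝ) < (p:ℝ) ^ (x:ℝ) := hlg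
    have hlh' : ∀ᶠ x : Rpos in atTop, (h x : ℝ) < (p:ℝ) ^ (x:ℝ) := hlh
    have hglt : SkLt g xPowX := by
      filter_upwards [hlg', pPow_lt_xPowX hp2] with x h1 h2
      exact lt_trans h1 h2
    have hhlt : SkLt h xPowX := by
      filter_upwards [hlh', pPow_lt_xPowX hp2] with x h1 h2
      exact lt_trans h1 h2
    obtain ⟨L1, hne1, hv1, he1⟩ := Sk_EP hg hglt
    obtain ⟨L2, hne2, hv2, he2⟩ := Sk_EP hh hhlt
    have hval : ∀ x : Rpos, (p:ℝ) ^ (x:ℝ) = (g x : ℝ) * (h x : ℝ) :=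
      fun x => congrArg Subtype.val (congrFun heqf x)
    have hlow : ∀ x : Rpos, 1 ≤ (x:ℝ) →
        ((ML L1 * ML L2 : ℕ):ℝ) ^ (x:ℝ) ≤ (g x : ℝ) * (h x : ℝ) := by
      intro x hx
      have h1 := evalL_lower_base hne1 hv1 x hx
      have h2 := evalL_lower_base hne2 hv2 x hx
      have hmm : ((ML L1 * ML L2 : ℕ):ℝ) ^ (x:ℝ)
          = ((ML L1 : ℕ):ℝ) ^ (x:ℝ) * ((ML L2 : ℕ):ℝ) ^ (x:ℝ) := by
        push_cast
        exact Real.mul_rpow (Nat.cast_nonneg _) (Nat.cast_nonneg _)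
      rw [hmm, he1 x, he2 x]
      have p1 : (0:ℝ) < ((ML L1 : ℕ):ℝ) ^ (x:ℝ) :=
        Real.rpow_pos_of_pos (by exact_mod_cast ML_pos L1) _
      have p2 : (0:ℝ) < ((ML L2 : ℕ):ℝ) ^ (x:ℝ) :=
        Real.rpow_pos_of_pos (by exact_mod_cast ML_pos L2) _
      nlinarith
    have hle : ML L1 * ML L2 ≤ p := by
      by_contra hcon
      have hpl : p + 1 ≤ ML L1 * ML L2 := by omega
      obtain ⟨x, hx1⟩ := ev_one_le.exists
      have hx0 : (0:ℝ) < (x:ℝ) := x.2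
      have h1 : (p:ℝ) ^ (x:ℝ) < ((p+1 : ℕ):ℝ) ^ (x:ℝ) :=
        Real.rpow_lt_rpow (Nat.cast_nonneg _) (by exact_mod_cast Nat.lt_succ_self p) hx0
      have h2 : ((p+1 : ℕ):ℝ) ^ (x:ℝ) ≤ ((ML L1 * ML L2 : ℕ):ℝ) ^ (x:ℝ) :=
        Real.rpow_le_rpow (Nat.cast_nonneg _) (by exact_mod_cast hpl) hx0.le
      have h3 := hlow x hx1
      rw [← hval x] at h3
      linarith
    have hge : p ≤ ML L1 * ML L2 := by
      by_contra hcon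
      have hml : ML L1 * ML L2 ≤ p - 1 := by omega
      set K := KL L1 + KL L2 with hK
      set C := ((SL L1 : ℝ) * (SL L2 : ℝ)) with hC
      have hup : ∀ x : Rpos, 1 ≤ (x:ℝ) →
          (g x : ℝ) * (h x : ℝ) ≤ C * (x:ℝ) ^ K * ((p - 1 : ℕ):ℝ) ^ (x:ℝ) := by
        intro x hx
        have hb1 := evalL_upper hv1 x hx
        have hb2 := evalL_upper hv2 x hx
        have hx0 : (0:ℝ) < (x:ℝ) := x.2
        have hg0 : (0:ℝ) < (g x : ℝ) := (g x).2
        have hh0 : (0:ℝ) < (h x : ℝ) := (h x).2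
        have hprod : (g x : ℝ) * (h x : ℝ) ≤
            ((SL L1 : ℝ) * (x:ℝ) ^ (KL L1) * ((ML L1 : ℕ):ℝ) ^ (x:ℝ)) *
            ((SL L2 : ℝ) * (x:ℝ) ^ (KL L2) * ((ML L2 : ℕ):ℝ) ^ (x:ℝ)) := by
          rw [he1 x, he2 x] at *
          have e1pos : (0:ℝ) < evalL L1 x := evalL_pos hne1 hv1 x
          have e2pos : (0:ℝ) < evalL L2 x := evalL_pos hne2 hv2 x
          nlinarith
        have hmm : ((ML L1 : ℕ):ℝ) ^ (x:ℝ) * ((ML L2 : ℕ):ℝ) ^ (x:ℝ)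
            = ((ML L1 * ML L2 : ℕ):ℝ) ^ (x:ℝ) := by
          push_cast
          exact (Real.mul_rpow (Nat.cast_nonneg _) (Nat.cast_nonneg _)).symm
        have hml2 : ((ML L1 * ML L2 : ℕ):ℝ) ^ (x:ℝ) ≤ ((p - 1 : ℕ):ℝ) ^ (x:ℝ) :=
          Real.rpow_le_rpow (Nat.cast_nonneg _) (by exact_mod_cast hml) hx0.le
        calc (g x : ℝ) * (h x : ℝ) ≤ _ := hprod
          _ = C * (x:ℝ) ^ K * (((ML L1 : ℕ):ℝ) ^ (x:ℝ) * ((ML L2 : ℕ):ℝ) ^ (x:ℝ)) := by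
              rw [hC, hK, pow_add]
              ring
          _ = C * (x:ℝ) ^ K * ((ML L1 * ML L2 : ℕ):ℝ) ^ (x:ℝ) := by rw [hmm]
          _ ≤ C * (x:ℝ) ^ K * ((p - 1 : ℕ):ℝ) ^ (x:ℝ) := by
              apply mul_le_mul_of_nonneg_left hml2
              have : (0:ℝ) ≤ C := by rw [hC]; positivity
              positivity
      obtain ⟨x, hx1, hx2⟩ := (ev_one_le.and (pt_bound hp2 C K)).exists
      have := lt_of_le_of_lt (hup x hx1) hx2
      rw [← hval x] at this
      exact absurd this (lt_irrefl _)
    have heqp : ML L1 * ML L2 = p := le_antisymm hle hge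
    have hdvd : ML L1 ∣ p := ⟨ML L2, heqp.symm⟩
    have hbig : ∀ (L : List Mono) (gg : Rpos → Rpos), L ≠ [] → validL L →
        (∀ x, (gg x : ℝ) = evalL L x) → ML L = p →
        (∀ᶠ x : Rpos in atTop, (gg x : ℝ) < (p:ℝ) ^ (x:ℝ)) → False := by
      intro L gg hne hv he hml hlt'
      obtain ⟨x, hx1, hx2⟩ := (ev_one_le.and hlt').exists
      have h1 := evalL_lower_base hne hv x hx1
      rw [hml, ← he x] at h1
      linarith
    rcases (Nat.Prime.eq_one_or_self_of_dvd hp _ hdvd) with h1 | h1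
    · have h2 : ML L2 = p := by
        rw [h1, one_mul] at heqp
        exact heqp
      exact hbig L2 h hne2 hv2 he2 h2 hlh'
    · exact hbig L1 g hne1 hv1 he1 h1 hlg'

-- chunk H: last helpers
lemma term_split (x : Rpos) {a a1 a2 k m : ℕ} (h : a = a1 + a2) :
    term x (a,k,m) = term x (a1,k,m) + term x (a2,k,m) := by
  subst h
  unfold term
  push_cast
  ring

lemma term_coeff_lt (x : Rpos) {a b k m : ℕ} (h : a < b) (hm : 1 ≤ m) :
    term x (a,k,m) < term x (b,k,m) := by
  have hm0 : (0:ℝ) < (m:ℝ) := by exact_mod_cast Nat.lt_of_lt_of_le Nat.zero_lt_one hm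
  have hx0 : (0:ℝ) < (x:ℝ) := x.2
  have hpos : (0:ℝ) < (x:ℝ) ^ k * (m:ℝ) ^ (x:ℝ) := by positivity
  have hab : (a:ℝ) < (b:ℝ) := by exact_mod_cast h
  unfold term
  nlinarith

end Aux

/-- The components of `Sk` below `x^x` are exactly `1`, `x` and the functions
`p^x` with `p ∈ ℕ` prime. -/
theorem skolem_components_below_x_pow_x (f : Rpos → Rpos) :
    (IsComponent f ∧ SkLt f xPowX) ↔
      (f = oneFun ∨ f = xFun ∨ ∃ (p : ℕ) (hp : p.Prime),
        f = fun x => ⟨(p : ℝ) ^ (x : ℝ),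
          Real.rpow_pos_of_pos (by exact_mod_cast hp.pos) _⟩) := by
  constructor
  · rintro ⟨⟨hSk, hAdd, hMul⟩, hlt⟩
    obtain ⟨L, hne, hv, heq⟩ := Sk_EP hSk hlt
    obtain ⟨t, rest, rfl⟩ := List.exists_cons_of_ne_nil hne
    rcases eq_or_ne rest [] with rfl | hrest
    swap
    · exfalso
      apply hAdd
      have hvt := hv t (List.mem_cons_self)
      have hvr : validL rest := fun s hs => hv s (List.mem_cons_of_mem _ hs)
      have hsum : ∀ x, (f x : ℝ) = term x t + evalL rest x := by
        intro x
        rw [heq x]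
        simp [evalL]
      refine ⟨fun x => ⟨term x t, term_pos hvt.1 hvt.2 x⟩,
        fun x => ⟨evalL rest x, evalL_pos hrest hvr x⟩,
        Sk_mono hvt.1 hvt.2, Sk_evalL hrest hvr, ?_, ?_, ?_⟩
      · unfold SkLt
        refine Eventually.of_forall fun x => ?_
        show term x t < (f x : ℝ)
        have := evalL_pos hrest hvr x
        rw [hsum x]
        linarith
      · unfold SkLt
        refine Eventually.of_forall fun x => ?_
        show evalL rest x < (f x : ℝ)
        have := term_pos hvt.1 hvt.2 x
        rw [hsum x]
        linarith
      · funext x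
        exact Subtype.ext (hsum x)
    · obtain ⟨a, k, m⟩ := t
      have hvt := hv (a,k,m) (List.mem_cons_self)
      have ha1 : 1 ≤ a := hvt.1
      have hm1 : 1 ≤ m := hvt.2
      have heq1 : ∀ x, (f x : ℝ) = term x (a,k,m) := by
        intro x
        rw [heq x]
        simp [evalL]
      rcases Nat.lt_or_ge a 2 with ha2 | ha2
      swap
      · exfalso
        apply hAdd
        refine ⟨fun x => ⟨term x (1,k,m), term_pos (le_refl 1) hm1 x⟩,
          fun x => ⟨term x (a-1,k,m), term_pos (by omega) hm1 x⟩,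
          Sk_mono (le_refl 1) hm1, Sk_mono (by omega) hm1, ?_, ?_, ?_⟩
        · unfold SkLt
          refine Eventually.of_forall fun x => ?_
          show term x (1,k,m) < (f x : ℝ)
          rw [heq1 x]
          exact term_coeff_lt x (by omega) hm1
        · unfold SkLt
          refine Eventually.of_forall fun x => ?_
          show term x (a-1,k,m) < (f x : ℝ)
          rw [heq1 x]
          exact term_coeff_lt x (by omega) hm1
        · funext x
          refine Subtype.ext ?_
          show (f x : ℝ) = term x (1,k,m) + term x (a-1,k,m)
          rw [heq1 x]
          exact term_split x (by omega)
      · have ha : a = 1 := by omega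
        subst ha
        rcases Nat.lt_or_ge m 2 with hm2 | hm2
        · have hm : m = 1 := by omega
          subst hm
          match k, heq1 with
          | 0, heq1 =>
            left
            funext x
            refine Subtype.ext ?_
            rw [heq1 x]
            unfold term oneFun
            norm_num
          | 1, heq1 =>
            right; left
            funext x
            refine Subtype.ext ?_
            rw [heq1 x]
            unfold term xFun
            norm_num
          | (k+2), heq1 =>
            exfalso
            apply hMul
            refine ⟨fun x => ⟨term x (1,1,1), term_pos (le_refl 1) (le_refl 1) x⟩,
              fun x => ⟨term x (1,k+1,1), term_pos (le_refl 1) (le_refl 1) x⟩,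
              Sk_mono (le_refl 1) (le_refl 1), Sk_mono (le_refl 1) (le_refl 1), ?_, ?_, ?_⟩
            · unfold SkLt
              filter_upwards [ev_transfer (eventually_gt_atTop (1:ℝ))] with x hx
              show term x (1,1,1) < (f x : ℝ)
              rw [heq1 x]
              unfold term
              push_cast
              rw [Real.one_rpow]
              have : (x:ℝ) ^ 1 < (x:ℝ) ^ (k+2) := pow_lt_pow_right₀ hx (by omega)
              simpa using this
            · unfold SkLt
              filter_upwards [ev_transfer (eventually_gt_atTop (1:ℝ))] with x hx
              show term x (1,k+1,1) < (f x : ℝ)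
              rw [heq1 x]
              unfold term
              push_cast
              rw [Real.one_rpow]
              have : (x:ℝ) ^ (k+1) < (x:ℝ) ^ (k+2) := pow_lt_pow_right₀ hx (by omega)
              simpa using this
            · funext x
              refine Subtype.ext ?_
              show (f x : ℝ) = term x (1,1,1) * term x (1,k+1,1)
              rw [heq1 x]
              unfold term
              push_cast
              rw [Real.one_rpow]
              ring
        · rcases Nat.eq_zero_or_pos k with hk | hk
          swap
          · exfalso
            apply hMul
            refine ⟨fun x => ⟨term x (1,k,1), term_pos (le_refl 1) (le_refl 1) x⟩,
              fun x => ⟨term x (1,0,m), term_pos (le_refl 1) hm1 x⟩,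
              Sk_mono (le_refl 1) (le_refl 1), Sk_mono (le_refl 1) hm1, ?_, ?_, ?_⟩
            · unfold SkLt
              filter_upwards [ev_transfer (eventually_gt_atTop (1:ℝ))] with x hx
              show term x (1,k,1) < (f x : ℝ)
              rw [heq1 x]
              unfold term
              push_cast
              rw [Real.one_rpow]
              have hx0 : (0:ℝ) < (x:ℝ) := x.2
              have h1 : (1:ℝ) < (m:ℝ) ^ (x:ℝ) := by
                refine Real.one_lt_rpow_iff_of_pos (by exact_mod_cast Nat.lt_of_lt_of_le Nat.zero_lt_one hm1) |>.mpr ?_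
                exact Or.inl ⟨by exact_mod_cast hm2, hx0⟩
              have h2 : (0:ℝ) < (x:ℝ) ^ k := pow_pos hx0 _
              nlinarith
            · unfold SkLt
              filter_upwards [ev_transfer (eventually_gt_atTop (1:ℝ))] with x hx
              show term x (1,0,m) < (f x : ℝ)
              rw [heq1 x]
              unfold term
              push_cast
              have h1 : (1:ℝ) < (x:ℝ) ^ k := one_lt_pow₀ hx (by omega)
              have h2 : (0:ℝ) < (m:ℝ) ^ (x:ℝ) :=
                Real.rpow_pos_of_pos (by exact_mod_cast Nat.lt_of_lt_of_le Nat.zero_lt_one hm1) _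
              nlinarith
            · funext x
              refine Subtype.ext ?_
              show (f x : ℝ) = term x (1,k,1) * term x (1,0,m)
              rw [heq1 x]
              unfold term
              push_cast
              rw [Real.one_rpow]
              ring
          · subst hk
            by_cases hp : m.Prime
            · right; right
              refine ⟨m, hp, ?_⟩
              funext x
              refine Subtype.ext ?_
              rw [heq1 x]
              unfold term
              push_cast
              norm_num
            · exfalso
              obtain ⟨u, hdvd, hu2, hum⟩ := Nat.exists_dvd_of_not_prime2 hm2 hp
              obtain ⟨v, rfl⟩ := hdvd
              have hv2 : 2 ≤ v := by
                rcases Nat.lt_or_ge v 2 with h | h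
                · interval_cases v <;> omega
                · exact h
              apply hMul
              refine ⟨fun x => ⟨term x (1,0,u), term_pos (le_refl 1) (show 1 ≤ u by omega) x⟩,
                fun x => ⟨term x (1,0,v), term_pos (le_refl 1) (show 1 ≤ v by omega) x⟩,
                Sk_mono (le_refl 1) (show 1 ≤ u by omega),
                Sk_mono (le_refl 1) (show 1 ≤ v by omega), ?_, ?_, ?_⟩
              · unfold SkLt
                refine Eventually.of_forall fun x => ?_
                show term x (1,0,u) < (f x : ℝ)
                rw [heq1 x]
                unfold term
                push_cast
                have hx0 : (0:ℝ) < (x:ℝ) := x.2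
                have : (u:ℝ) ^ (x:ℝ) < ((u*v:ℕ):ℝ) ^ (x:ℝ) :=
                  Real.rpow_lt_rpow (Nat.cast_nonneg _)
                    (by exact_mod_cast hum) hx0
                push_cast at this
                nlinarith
              · unfold SkLt
                refine Eventually.of_forall fun x => ?_
                show term x (1,0,v) < (f x : ℝ)
                rw [heq1 x]
                unfold term
                push_cast
                have hx0 : (0:ℝ) < (x:ℝ) := x.2
                have hvm : v < u * v := by nlinarith
                have : (v:ℝ) ^ (x:ℝ) < ((u*v:ℕ):ℝ) ^ (x:ℝ) :=
                  Real.rpow_lt_rpow (Nat.cast_nonneg _)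
                    (by exact_mod_cast hvm) hx0
                push_cast at this
                nlinarith
              · funext x
                refine Subtype.ext ?_
                show (f x : ℝ) = term x (1,0,u) * term x (1,0,v)
                rw [heq1 x]
                unfold term
                push_cast
                have hmr : ((u:ℝ) * (v:ℝ)) ^ (x:ℝ) = (u:ℝ) ^ (x:ℝ) * (v:ℝ) ^ (x:ℝ) :=
                  Real.mul_rpow (Nat.cast_nonneg _) (Nat.cast_nonneg _)
                rw [hmr]
                ring
  · rintro (rfl | rfl | ⟨p, hp, rfl⟩)
    · refine ⟨oneFun_component, ?_⟩
      unfold SkLt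
      filter_upwards [ev_transfer (eventually_gt_atTop (1:ℝ))] with x hx
      show (1:ℝ) < (x:ℝ) ^ (x:ℝ)
      exact (Real.one_lt_rpow_iff_of_pos x.2).mpr (Or.inl ⟨hx, x.2⟩)
    · refine ⟨xFun_component, ?_⟩
      unfold SkLt
      filter_upwards [ev_transfer (eventually_gt_atTop (1:ℝ))] with x hx
      show (x:ℝ) < (x:ℝ) ^ (x:ℝ)
      calc (x:ℝ) = (x:ℝ) ^ (1:ℝ) := (Real.rpow_one _).symm
        _ < (x:ℝ) ^ (x:ℝ) := Real.rpow_lt_rpow_of_exponent_lt hx hx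
    · exact ⟨pPow_component hp, pPow_lt_xPowX hp.two_le⟩
end

section
/- If α and β are ordinals with α ≥ β, then α ⊕ β ≤ α + β·2, where ⊕ is the Hessenberg (natural) sum, + is ordinal addition and β·2 is ordinal multiplication. -/
universe u

namespace Ordinal

open Set in
/-- Natural (Hessenberg) addition of ordinals, as defined in the former
`Mathlib.SetTheory.Ordinal.NaturalOps` (removed from Mathlib). -/
noncomputable def nadd (a b : Ordinal.{u}) : Ordinal.{u} :=
  max (⨆ x : Iio a, Order.succ (nadd x.1 b)) (⨆ x : Iio b, Order.succ (nadd a x.1))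
termination_by (a, b)
decreasing_by
  · cases x with | mk v hv => exact Prod.Lex.left _ _ hv
  · cases x with | mk v hv => exact Prod.Lex.right _ hv

theorem nadd_le_iff {a b c : Ordinal.{u}} :
    nadd a b ≤ c ↔ (∀ a' < a, nadd a' b < c) ∧ ∀ b' < b, nadd a b' < c := by
  rw [nadd, max_le_iff, Ordinal.iSup_le_iff, Ordinal.iSup_le_iff]
  simp only [Order.succ_le_iff, Subtype.forall, Set.mem_Iio]

theorem nadd_lt_nadd_left {b c : Ordinal.{u}} (h : b < c) (a : Ordinal.{u}) :
    nadd a b < nadd a c :=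
  (nadd_le_iff.1 le_rfl).2 b h

theorem nadd_lt_nadd_right {a b : Ordinal.{u}} (h : a < b) (c : Ordinal.{u}) :
    nadd a c < nadd b c :=
  (nadd_le_iff.1 le_rfl).1 a h

theorem nadd_le_nadd_left {b c : Ordinal.{u}} (h : b ≤ c) (a : Ordinal.{u}) :
    nadd a b ≤ nadd a c := by
  rcases h.lt_or_eq with h | h
  · exact (nadd_lt_nadd_left h a).le
  · rw [h]

theorem nadd_le_nadd_right {a b : Ordinal.{u}} (h : a ≤ b) (c : Ordinal.{u}) :
    nadd a c ≤ nadd b c := by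
  rcases h.lt_or_eq with h | h
  · exact (nadd_lt_nadd_right h c).le
  · rw [h]

theorem nadd_lt_nadd_of_lt_of_le {a b c d : Ordinal.{u}} (h1 : a < b) (h2 : c ≤ d) :
    nadd a c < nadd b d :=
  (nadd_lt_nadd_right h1 c).trans_le (nadd_le_nadd_left h2 b)

theorem nadd_lt_nadd_of_le_of_lt {a b c d : Ordinal.{u}} (h1 : a ≤ b) (h2 : c < d) :
    nadd a c < nadd b d :=
  (nadd_le_nadd_right h1 c).trans_lt (nadd_lt_nadd_left h2 b)

theorem nadd_comm : ∀ a b : Ordinal.{u}, nadd a b = nadd b a := by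
  intro a
  induction a using Ordinal.induction with
  | h a iha =>
  intro b
  induction b using Ordinal.induction with
  | h b ihb =>
  apply le_antisymm
  · refine nadd_le_iff.2 ⟨fun a' ha' => ?_, fun b' hb' => ?_⟩
    · rw [iha a' ha' b]; exact nadd_lt_nadd_left ha' b
    · rw [ihb b' hb']; exact nadd_lt_nadd_right hb' a
  · refine nadd_le_iff.2 ⟨fun b' hb' => ?_, fun a' ha' => ?_⟩
    · rw [← ihb b' hb']; exact nadd_lt_nadd_left hb' a
    · rw [← iha a' ha' b]; exact nadd_lt_nadd_right ha' b

theorem le_nadd_self {a b : Ordinal.{u}} : a ≤ nadd b a := by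
  induction a using Ordinal.induction with
  | h a iha =>
  refine le_of_forall_lt fun c hc => ?_
  exact (iha c hc).trans_lt (nadd_lt_nadd_left hc b)

@[simp]
theorem nadd_zero (a : Ordinal.{u}) : nadd a 0 = a := by
  induction a using Ordinal.induction with
  | h a iha =>
  apply le_antisymm
  · refine nadd_le_iff.2 ⟨fun a' ha' => ?_, fun b' hb' => absurd hb' not_lt_zero⟩
    rw [iha a' ha']; exact ha'
  · rw [nadd_comm]; exact le_nadd_self

end Ordinal

open Ordinal

/-- Joint auxiliary: for every value `v` and exponent `e`,
(K): if `a < ω^e`, `b < ω^(e+1)` and `(ω^e*q + a) ♯ b = v` then `v ≤ ω^e*q + (a ♯ b)`;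
(C): if `r, s < ω^e` and `r ♯ s = v` then `v < ω^e`. -/
theorem nadd_aux (v : Ordinal) : ∀ e : Ordinal,
    (∀ q a b : Ordinal, a < ω ^ e → b < ω ^ (e + 1) →
      (ω ^ e * q + a).nadd b = v → v ≤ ω ^ e * q + a.nadd b) ∧
    (∀ r s : Ordinal, r < ω ^ e → s < ω ^ e → r.nadd s = v → v < ω ^ e) := by
  induction v using Ordinal.induction with
  | h v IHv =>
  intro e
  induction e using Ordinal.induction with
  | h e IHe =>
  have hω : (ω : Ordinal) ^ e ≠ 0 := (opow_pos e omega0_pos).ne'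
  constructor
  · -- part K
    intro q a b ha hb hv
    subst hv
    rw [nadd_le_iff]
    constructor
    · -- ∀ x < ω^e*q + a, x ♯ b < ω^e*q + (a ♯ b)
      intro x hx
      set X := ω ^ e * q with hX
      have hvx : x.nadd b < (X + a).nadd b := nadd_lt_nadd_right hx b
      set k := x / ω ^ e with hk
      set r := x % ω ^ e with hrdef
      have hxk : ω ^ e * k + r = x := div_add_mod x (ω ^ e)
      have hr : r < ω ^ e := mod_lt x hω
      have hrx : r ≤ x := by rw [← hxk]; exact le_add_self
      have hkq : k ≤ q := by
        have h1 : x < ω ^ e * (q + 1) := by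
          rw [mul_add, mul_one]
          exact hx.trans_le (add_le_add_right ha.le X)
        have := (div_lt hω).2 h1
        rw [add_one_eq_succ] at this
        exact Order.lt_succ_iff.1 this
      have hIH1 : x.nadd b ≤ ω ^ e * k + r.nadd b := by
        refine (IHv _ hvx e).1 k r b hr hb ?_
        rw [hxk]
      rcases hkq.lt_or_eq with hkq' | hkq'
      · -- k < q
        set m := b / ω ^ e with hm
        set s := b % ω ^ e with hsdef
        have hbm : ω ^ e * m + s = b := div_add_mod b (ω ^ e)
        have hs : s < ω ^ e := mod_lt b hω
        have hsb : s ≤ b := by rw [← hbm]; exact le_add_self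
        have hmω : m < ω := by
          refine (div_lt hω).2 ?_
          rwa [← opow_succ, ← add_one_eq_succ]
        have hrXa : r < X + a := hrx.trans_lt hx
        have hIH2 : b.nadd r ≤ ω ^ e * m + s.nadd r := by
          have hval : b.nadd r < (X + a).nadd b := by
            rw [nadd_comm b r]
            exact nadd_lt_nadd_of_lt_of_le hrXa le_rfl
          refine (IHv _ hval e).1 m s r hs (hr.trans ?_) ?_
          · exact (opow_lt_opow_iff_right one_lt_omega0).2 (lt_add_one e)
          · rw [hbm]
        have hIH3 : s.nadd r < ω ^ e := by
          have hval : s.nadd r < (X + a).nadd b := by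
            have := nadd_lt_nadd_of_le_of_lt hsb hrXa
            rwa [nadd_comm b (X + a)] at this
          exact (IHv _ hval e).2 s r hs hr rfl
        -- chain
        have h4 : x.nadd b < ω ^ e * (k + m + 1) := by
          calc x.nadd b ≤ ω ^ e * k + r.nadd b := hIH1
            _ = ω ^ e * k + b.nadd r := by rw [nadd_comm]
            _ ≤ ω ^ e * k + (ω ^ e * m + s.nadd r) := add_le_add_right hIH2 _
            _ < ω ^ e * k + (ω ^ e * m + ω ^ e) := by
                exact add_lt_add_right (add_lt_add_right hIH3 _) _
            _ = ω ^ e * (k + m + 1) := by rw [mul_add, mul_add, mul_one, add_assoc]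
        have h5 : ω ^ e * (k + m + 1) ≤ ω ^ e * (q + m) := by
          refine mul_le_mul_right ?_ _
          obtain ⟨m', hm'⟩ := lt_omega0.1 hmω
          rw [hm']
          have hkl : k + 1 ≤ q := by rwa [add_one_eq_succ, Order.succ_le_iff]
          calc k + (m' : Ordinal) + 1 = k + ((m' : Ordinal) + 1) := by rw [add_assoc]
            _ = k + (1 + (m' : Ordinal)) := by
                congr 1
                rw [← Nat.cast_one, ← Nat.cast_add, ← Nat.cast_add, Nat.add_comm]
            _ = k + 1 + (m' : Ordinal) := by rw [add_assoc]
            _ ≤ q + (m' : Ordinal) := add_le_add_left hkl _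
        have h6 : ω ^ e * (q + m) ≤ X + a.nadd b := by
          rw [mul_add]
          refine add_le_add_right ?_ X
          exact (mul_div_le b (ω ^ e)).trans le_nadd_self
        exact h4.trans_le (h5.trans h6)
      · -- k = q
        subst hkq'
        have hra : r < a := by
          rw [← hxk] at hx
          exact (add_lt_add_iff_left (ω ^ e * k)).1 hx
        calc x.nadd b ≤ ω ^ e * k + r.nadd b := hIH1
          _ < ω ^ e * k + a.nadd b := add_lt_add_right (nadd_lt_nadd_right hra b) _
    · -- ∀ b' < b, (X+a) ♯ b' < X + (a ♯ b)
      intro b' hb'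
      have hval : (ω ^ e * q + a).nadd b' < (ω ^ e * q + a).nadd b := nadd_lt_nadd_left hb' _
      have h1 := (IHv _ hval e).1 q a b' ha (hb'.trans hb) rfl
      exact h1.trans_lt (add_lt_add_right (nadd_lt_nadd_left hb' a) _)
  · -- part C
    intro r s hr hs hv
    have core : ∀ t u : Ordinal, u ≤ t → t < ω ^ e → u < ω ^ e → t.nadd u = v → v < ω ^ e := by
      intro t u hut ht hu hv
      rcases eq_or_ne t 0 with ht0 | ht0
      · subst ht0
        have hu0 : u = 0 := le_antisymm (by simpa using hut) (zero_le : 0 ≤ u)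
        subst hu0
        rw [← hv]
        simpa using opow_pos e omega0_pos
      · set d := log ω t with hd
        have hdt : ω ^ d ≤ t := opow_log_le_self ω ht0
        have htd : t < ω ^ (d + 1) := by
          rw [add_one_eq_succ]; exact lt_opow_succ_log_self one_lt_omega0 t
        have hde : d < e := (opow_lt_opow_iff_right one_lt_omega0).1 (hdt.trans_lt ht)
        have hωd : (ω : Ordinal) ^ d ≠ 0 := (opow_pos d omega0_pos).ne'
        set k := t / ω ^ d with hk
        set r' := t % ω ^ d with hr'
        have htk : ω ^ d * k + r' = t := div_add_mod t (ω ^ d)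
        have hr'd : r' < ω ^ d := mod_lt t hωd
        have hkω : k < ω := by
          refine (div_lt hωd).2 ?_
          rwa [← opow_succ, ← add_one_eq_succ]
        have hud : u < ω ^ (d + 1) := hut.trans_lt htd
        -- first K application at exponent d (same value v)
        have h1 : v ≤ ω ^ d * k + r'.nadd u := by
          refine ((IHe d hde).1) k r' u hr'd hud ?_
          rw [htk, hv]
        -- decompose u
        set m := u / ω ^ d with hm
        set s' := u % ω ^ d with hs'
        have hum : ω ^ d * m + s' = u := div_add_mod u (ω ^ d)
        have hs'd : s' < ω ^ d := mod_lt u hωd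
        have hmω : m < ω := by
          refine (div_lt hωd).2 ?_
          rwa [← opow_succ, ← add_one_eq_succ]
        have hr't : r' < t := hr'd.trans_le hdt
        have hs'u : s' ≤ u := by rw [← hum]; exact le_add_self
        have h2 : u.nadd r' ≤ ω ^ d * m + s'.nadd r' := by
          have hval : u.nadd r' < v := by
            rw [← hv, nadd_comm t u]
            exact nadd_lt_nadd_of_le_of_lt le_rfl hr't
          refine (IHv _ hval d).1 m s' r' hs'd (hr'd.trans ?_) ?_
          · exact (opow_lt_opow_iff_right one_lt_omega0).2 (lt_add_one d)
          · rw [hum]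
        have h3 : s'.nadd r' < ω ^ d := by
          have hval : s'.nadd r' < v := by
            rw [← hv, nadd_comm t u]
            exact nadd_lt_nadd_of_le_of_lt hs'u hr't
          exact (IHv _ hval d).2 s' r' hs'd hr'd rfl
        have h4 : v < ω ^ d * (k + m + 1) := by
          calc v ≤ ω ^ d * k + r'.nadd u := h1
            _ = ω ^ d * k + u.nadd r' := by rw [nadd_comm]
            _ ≤ ω ^ d * k + (ω ^ d * m + s'.nadd r') := add_le_add_right h2 _
            _ < ω ^ d * k + (ω ^ d * m + ω ^ d) := add_lt_add_right (add_lt_add_right h3 _) _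
            _ = ω ^ d * (k + m + 1) := by rw [mul_add, mul_add, mul_one, add_assoc]
        have hfin : k + m + 1 < ω := by
          obtain ⟨k', hk'⟩ := lt_omega0.1 hkω
          obtain ⟨m', hm'⟩ := lt_omega0.1 hmω
          rw [hk', hm']
          have hcast : ((k' + m' + 1 : ℕ) : Ordinal) = (k' : Ordinal) + m' + 1 := by
            push_cast; ring
          rw [← hcast]
          exact nat_lt_omega0 _
        have h5 : ω ^ d * (k + m + 1) < ω ^ e := by
          calc ω ^ d * (k + m + 1) < ω ^ d * ω :=
                (mul_lt_mul_iff_of_pos_left (opow_pos d omega0_pos)).2 hfin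
            _ = ω ^ (d + 1) := by rw [← opow_succ, add_one_eq_succ]
            _ ≤ ω ^ e := opow_le_opow_right omega0_pos
                (by rwa [add_one_eq_succ, Order.succ_le_iff])
        exact h4.trans h5
    rcases le_total s r with hsr | hrs
    · exact core r s hsr hr hs hv
    · refine core s r hrs hs hr ?_
      rw [nadd_comm, hv]

theorem nadd_lt_add_mul_two' (α β : Ordinal) (hβ : 0 < β) :
    α.nadd β < α + β * 2 := by
  set e := log ω β with he
  have hω : (ω : Ordinal) ^ e ≠ 0 := (opow_pos e omega0_pos).ne'
  have h1 : ω ^ e ≤ β := opow_log_le_self ω hβ.ne'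
  have h2 : β < ω ^ (e + 1) := by
    rw [add_one_eq_succ]; exact lt_opow_succ_log_self one_lt_omega0 β
  set q := α / ω ^ e with hq
  set a := α % ω ^ e with ha
  have hαq : ω ^ e * q + a = α := div_add_mod α (ω ^ e)
  have haω : a < ω ^ e := mod_lt α hω
  set n := β / ω ^ e with hn
  set ρ := β % ω ^ e with hρ
  have hβn : ω ^ e * n + ρ = β := div_add_mod β (ω ^ e)
  have hρω : ρ < ω ^ e := mod_lt β hω
  have hn1 : 1 ≤ n := (le_div hω).2 (by rwa [mul_one])
  have hK1 : α.nadd β ≤ ω ^ e * q + a.nadd β := by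
    refine (nadd_aux _ e).1 q a β haω h2 ?_
    rw [hαq]
  have hK2 : β.nadd a ≤ ω ^ e * n + ρ.nadd a := by
    refine (nadd_aux _ e).1 n ρ a hρω
      (haω.trans ((opow_lt_opow_iff_right one_lt_omega0).2 (lt_add_one e))) ?_
    rw [hβn]
  have hC : ρ.nadd a < ω ^ e := (nadd_aux _ e).2 ρ a hρω haω rfl
  have h3 : α.nadd β < ω ^ e * q + ω ^ e * (n + 1) := by
    calc α.nadd β ≤ ω ^ e * q + a.nadd β := hK1
      _ = ω ^ e * q + β.nadd a := by rw [nadd_comm]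
      _ ≤ ω ^ e * q + (ω ^ e * n + ρ.nadd a) := add_le_add_right hK2 _
      _ < ω ^ e * q + (ω ^ e * n + ω ^ e) := add_lt_add_right (add_lt_add_right hC _) _
      _ = ω ^ e * q + ω ^ e * (n + 1) := by rw [mul_add, mul_one]
  have h4 : ω ^ e * (n + 1) ≤ β * 2 := by
    have : ω ^ e * (n + 1) ≤ ω ^ e * (n + n) :=
      mul_le_mul_right (add_le_add_right hn1 n) _
    refine this.trans ?_
    have hβ2 : β * 2 = β + β := by
      have : (2 : Ordinal) = 1 + 1 := by norm_num
      rw [this, mul_add, mul_one]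
    rw [hβ2, mul_add]
    have hb : ω ^ e * n ≤ β := mul_div_le β (ω ^ e)
    exact add_le_add hb hb
  calc α.nadd β < ω ^ e * q + ω ^ e * (n + 1) := h3
    _ ≤ ω ^ e * q + β * 2 := add_le_add_right h4 _
    _ ≤ α + β * 2 := by
        refine add_le_add_left ?_ _
        rw [← hαq]; exact le_self_add

theorem nadd_le_add_mul_two (α β : Ordinal) (h : β ≤ α) :
    Ordinal.nadd α β ≤ α + β * 2 := by
  rcases eq_or_lt_of_le (zero_le : 0 ≤ β) with hβ | hβ
  · rw [← hβ, Ordinal.nadd_zero]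
    exact le_self_add
  · exact (nadd_lt_add_mul_two' α β hβ).le
end

section
/- Let G be a linearly ordered abelian group and let A be a subset of the positive elements of G that is well-ordered by the group order, with order type α. Suppose all elements of A lie in pairwise distinct archimedean classes. Then ∑A, the set of all finite sums of one or more elements of A (repetitions allowed), is well-ordered of order type at most ω^α. -/
/-- `a ≼ b` in an ordered abelian group: `a ≤ n • b` for some natural number `n`. -/
def Preceq {G : Type*} [AddCommGroup G] [LinearOrder G] [IsOrderedAddMonoid G] (a b : G) : Prop :=
  ∃ n : ℕ, a ≤ n • b

/-- `a ≍ b`: `a` and `b` lie in the same archimedean class. -/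
def ArchEquiv {G : Type*} [AddCommGroup G] [LinearOrder G] [IsOrderedAddMonoid G] (a b : G) : Prop :=
  Preceq a b ∧ Preceq b a

lemma nsmul_mono_of_le {G : Type*} [AddCommGroup G] [LinearOrder G] [IsOrderedAddMonoid G] {a b : G}
    (h : a ≤ b) (n : ℕ) : n • a ≤ n • b := by
  induction n with
  | zero => simp
  | succ k ih => simpa [succ_nsmul] using add_le_add ih h

lemma preceq_refl {G : Type*} [AddCommGroup G] [LinearOrder G] [IsOrderedAddMonoid G] (a : G) : Preceq a a :=
  ⟨1, by simp⟩

lemma preceq_trans {G : Type*} [AddCommGroup G] [LinearOrder G] [IsOrderedAddMonoid G] {a b c : G}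
    (h1 : Preceq a b) (h2 : Preceq b c) : Preceq a c := by
  obtain ⟨n, hn⟩ := h1
  obtain ⟨m, hm⟩ := h2
  exact ⟨n * m, hn.trans (by rw [mul_comm n m, mul_nsmul]; exact nsmul_mono_of_le hm n)⟩

/-- The setoid on a set `A` identifying elements in the same archimedean class. -/
def archSetoid {G : Type*} [AddCommGroup G] [LinearOrder G] [IsOrderedAddMonoid G] (A : Set G) : Setoid A :=
  ⟨fun a b => ArchEquiv a.1 b.1,
   ⟨fun _ => ⟨preceq_refl _, preceq_refl _⟩,
    fun h => ⟨h.2, h.1⟩,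
    fun h1 h2 => ⟨preceq_trans h1.1 h2.1, preceq_trans h2.2 h1.2⟩⟩⟩

/-- The ordering induced by strict domination `≺` on the set of archimedean classes. -/
def archClassLt {G : Type*} [AddCommGroup G] [LinearOrder G] [IsOrderedAddMonoid G] (A : Set G) :
    Quotient (archSetoid A) → Quotient (archSetoid A) → Prop :=
  fun x y => ∃ a b : A, x = Quotient.mk (archSetoid A) a ∧ y = Quotient.mk (archSetoid A) b ∧
    Preceq a.1 b.1 ∧ ¬ Preceq b.1 a.1

section SumsAux

open Ordinal

variable {G : Type*} [AddCommGroup G] [LinearOrder G] [IsOrderedAddMonoid G]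

/-- Sort a finset in (strictly) decreasing order. -/
noncomputable def sortDescG (s : Finset G) : List G := (s.sort (· ≤ ·)).reverse

lemma sortDescG_sorted (s : Finset G) : (sortDescG s).Pairwise (· > ·) := by
  rw [sortDescG, List.pairwise_reverse]
  exact (Finset.sortedLT_sort s).pairwise

lemma mem_sortDescG {s : Finset G} {b : G} : b ∈ sortDescG s ↔ b ∈ s := by
  rw [sortDescG, List.mem_reverse, Finset.mem_sort]

variable (A : Set G)
variable [inst : IsWellOrder A (fun a b => (a : G) < (b : G))]

open scoped Classical in
noncomputable def aidx (b : G) : Ordinal :=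
  if h : b ∈ A then Ordinal.typein (fun a b : A => (a : G) < (b : G)) ⟨b, h⟩ else 0

lemma aidx_lt_aidx {b c : G} (hb : b ∈ A) (hc : c ∈ A) (h : b < c) :
    aidx A b < aidx A c := by
  classical
  simp only [aidx, dif_pos hb, dif_pos hc]
  exact (Ordinal.typein_lt_typein _).2 h

lemma aidx_lt_type {b : G} (hb : b ∈ A) :
    aidx A b < Ordinal.type (fun a b : A => (a : G) < (b : G)) := by
  classical
  simp only [aidx, dif_pos hb]
  exact Ordinal.typein_lt_type _ _

/-- Cantor-normal-form-style ordinal value of a formal sum with exponents from a list. -/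
noncomputable def oList : List G → (G → ℕ) → Ordinal
  | [], _ => 0
  | b :: t, f => Ordinal.omega0 ^ aidx A b * (f b : Ordinal) + oList t f

lemma oList_lt {l : List G} {f : G → ℕ} {e : Ordinal}
    (hs : l.Pairwise (· > ·)) (hA : ∀ b ∈ l, b ∈ A) (he : ∀ b ∈ l, aidx A b < e) :
    oList A l f < Ordinal.omega0 ^ e := by
  induction l generalizing e with
  | nil => exact opow_pos e omega0_pos
  | cons b t ih =>
    have hbt : ∀ c ∈ t, c < b := fun c hc => (List.pairwise_cons.1 hs).1 c hc
    have ht : oList A t f < Ordinal.omega0 ^ aidx A b :=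
      ih (List.pairwise_cons.1 hs).2 (fun c hc => hA c (List.mem_cons_of_mem _ hc))
        (fun c hc => aidx_lt_aidx A (hA c (List.mem_cons_of_mem _ hc))
          (hA b (List.mem_cons_self)) (hbt c hc))
    have h1 : oList A (b :: t) f < Ordinal.omega0 ^ aidx A b * (f b : Ordinal) +
        Ordinal.omega0 ^ aidx A b := add_lt_add_right ht _
    rw [← Ordinal.mul_succ] at h1
    have h2 : Ordinal.omega0 ^ aidx A b * Order.succ (f b : Ordinal) <
        Ordinal.omega0 ^ aidx A b * Ordinal.omega0 :=
      mul_lt_mul_of_pos_left (Ordinal.isSuccLimit_omega0.succ_lt (Ordinal.nat_lt_omega0 _))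
        (opow_pos _ omega0_pos)
    rw [← Ordinal.opow_succ] at h2
    have h3 : Ordinal.omega0 ^ Order.succ (aidx A b) ≤ Ordinal.omega0 ^ e :=
      Ordinal.opow_le_opow_right omega0_pos
        (Order.succ_le_of_lt (he b (List.mem_cons_self)))
    exact h1.trans (h2.trans_le h3)

lemma oList_lt_oList {l : List G} {f g : G → ℕ} {a : G}
    (hs : l.Pairwise (· > ·)) (hA : ∀ b ∈ l, b ∈ A) (ha : a ∈ l)
    (hfg : ∀ b ∈ l, a < b → f b = g b) (hlt : f a < g a) :
    oList A l f < oList A l g := by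
  induction l with
  | nil => exact absurd ha (List.not_mem_nil)
  | cons b t ih =>
    have hbt : ∀ c ∈ t, c < b := fun c hc => (List.pairwise_cons.1 hs).1 c hc
    rcases List.mem_cons.1 ha with rfl | hat
    · -- head is the pivot
      have ht : oList A t f < Ordinal.omega0 ^ aidx A a :=
        oList_lt A (List.pairwise_cons.1 hs).2
          (fun c hc => hA c (List.mem_cons_of_mem _ hc))
          (fun c hc => aidx_lt_aidx A (hA c (List.mem_cons_of_mem _ hc))
            (hA a (List.mem_cons_self)) (hbt c hc))
      have h1 : oList A (a :: t) f < Ordinal.omega0 ^ aidx A a * (f a : Ordinal) +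
          Ordinal.omega0 ^ aidx A a := add_lt_add_right ht _
      rw [← Ordinal.mul_succ] at h1
      have h2 : Ordinal.omega0 ^ aidx A a * Order.succ (f a : Ordinal) ≤
          Ordinal.omega0 ^ aidx A a * (g a : Ordinal) := by
        apply mul_le_mul_right
        rw [Order.succ_le_iff]
        exact_mod_cast hlt
      have h3 : Ordinal.omega0 ^ aidx A a * (g a : Ordinal) ≤ oList A (a :: t) g :=
        le_self_add
      exact h1.trans_le (h2.trans h3)
    · -- pivot is in the tail
      have hba : a < b := hbt a hat
      have hfb : f b = g b := hfg b (List.mem_cons_self) hba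
      show Ordinal.omega0 ^ aidx A b * (f b : Ordinal) + oList A t f <
          Ordinal.omega0 ^ aidx A b * (g b : Ordinal) + oList A t g
      rw [hfb]
      exact add_lt_add_right (ih (List.pairwise_cons.1 hs).2
        (fun c hc => hA c (List.mem_cons_of_mem _ hc)) hat
        (fun c hc h => hfg c (List.mem_cons_of_mem _ hc) h)) _

lemma oList_filter (l : List G) (f : G → ℕ) :
    oList A l f = oList A (l.filter (fun b => f b ≠ 0)) f := by
  induction l with
  | nil => rfl
  | cons b t ih =>
    simp only [oList, List.filter_cons]
    by_cases h : f b = 0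
    · rw [if_neg (by simp [h]), h, ih]; simp
    · rw [if_pos (by simp [h]), ih]
      simp only [oList]

lemma oList_congr {l₁ l₂ : List G} (f : G → ℕ)
    (h₁ : l₁.Pairwise (· > ·)) (h₂ : l₂.Pairwise (· > ·))
    (hmem : ∀ b, f b ≠ 0 → (b ∈ l₁ ↔ b ∈ l₂)) :
    oList A l₁ f = oList A l₂ f := by
  haveI : Std.Antisymm (α := G) (· > ·) := ⟨fun a b h1 h2 => absurd h2 (asymm h1)⟩
  rw [oList_filter A l₁ f, oList_filter A l₂ f]
  congr 1
  refine List.Perm.eq_of_pairwise' (h₁.filter _) (h₂.filter _) ?_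
  refine (List.perm_ext_iff_of_nodup (h₁.nodup.filter _) (h₂.nodup.filter _)).2 fun b => ?_
  simp only [List.mem_filter, decide_eq_true_eq]
  constructor
  · rintro ⟨hb, hb0⟩; exact ⟨(hmem b hb0).1 hb, hb0⟩
  · rintro ⟨hb, hb0⟩; exact ⟨(hmem b hb0).2 hb, hb0⟩

end SumsAux

section SumSide

variable {G : Type*} [AddCommGroup G] [LinearOrder G] [IsOrderedAddMonoid G]

lemma exists_repr {A : Set G} {x : G} (hx : x ∈ AddSubsemigroup.closure A) :
    ∃ f : G →₀ ℕ, ↑f.support ⊆ A ∧ f.sum (fun b n => n • b) = x := by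
  induction hx using AddSubsemigroup.closure_induction with
  | mem b hb =>
    refine ⟨Finsupp.single b 1, ?_, ?_⟩
    · rw [Finsupp.support_single_ne_zero b one_ne_zero]
      simpa using hb
    · rw [Finsupp.sum_single_index (by simp)]
      simp
  | add x y hx hy ihx ihy =>
    obtain ⟨f, hfs, hfe⟩ := ihx
    obtain ⟨g, hgs, hge⟩ := ihy
    refine ⟨f + g, ?_, ?_⟩
    · intro b hb
      rcases Finset.mem_union.1 (Finsupp.support_add hb) with h | h
      · exact hfs h
      · exact hgs h
    · rw [Finsupp.sum_add_index' (by simp) (fun a m n => add_nsmul a m n), hfe, hge]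

lemma sum_lt_sum {A : Set G}
    (hdist : ∀ a ∈ A, ∀ b ∈ A, ArchEquiv a b → a = b)
    (hApos : ∀ a ∈ A, 0 < a)
    (f g : G →₀ ℕ) (hf : ↑f.support ⊆ A) (hg : ↑g.support ⊆ A) {a : G} (ha : a ∈ A)
    (hhi : ∀ b, a < b → f b = g b) (hlt : g a < f a) :
    g.sum (fun b n => n • b) < f.sum (fun b n => n • b) := by
  classical
  set S : Finset G := f.support ∪ g.support with hS
  have hSA : ∀ b ∈ S, b ∈ A := fun b hb => by
    rcases Finset.mem_union.1 hb with h | h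
    · exact hf h
    · exact hg h
  have ha0 : 0 < a := hApos a ha
  -- strict archimedean domination
  have key : ∀ b ∈ A, b < a → ∀ n : ℕ, n • b < a := by
    intro b hb hba n
    by_contra hcon
    push_neg at hcon
    have heq : a = b := hdist a ha b hb ⟨⟨n, hcon⟩, ⟨1, by simpa using hba.le⟩⟩
    exact absurd hba (by simp [heq])
  -- the predicate of being infinitesimal w.r.t. a
  set P : G → Prop := fun x => ∀ n : ℕ, n • x < a with hP
  have hP0 : P 0 := fun n => by simpa using ha0
  have hPadd : ∀ x y, P x → P y → P (x + y) := by
    intro x y hx hy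
    have hmax : P (max x y) := by
      intro n
      rcases max_cases x y with ⟨h, _⟩ | ⟨h, _⟩
      · rw [h]; exact hx n
      · rw [h]; exact hy n
    intro n
    calc n • (x + y) = n • x + n • y := smul_add n x y
      _ ≤ n • max x y + n • max x y :=
        add_le_add (nsmul_mono_of_le (le_max_left x y) n) (nsmul_mono_of_le (le_max_right x y) n)
      _ = (n + n) • max x y := (add_nsmul _ n n).symm
      _ < a := hmax (n + n)
  have hPzsmul : ∀ b ∈ A, b < a → ∀ m : ℤ, P (m • b) := by
    intro b hb hba m n
    rcases le_or_gt m 0 with hm | hm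
    · have hb0 : 0 ≤ b := (hApos b hb).le
      have h1 : m • b ≤ 0 := by
        calc m • b ≤ (0 : ℤ) • b := zsmul_le_zsmul_left hb0 hm
          _ = 0 := zero_zsmul b
      calc n • (m • b) ≤ n • (0 : G) := nsmul_mono_of_le h1 n
        _ = 0 := smul_zero n
        _ < a := ha0
    · have h1 : m • b = m.toNat • b := by
        rw [← natCast_zsmul]
        congr 1
        exact (Int.toNat_of_nonneg hm.le).symm
      rw [h1, ← mul_nsmul']
      exact key b hb hba _
  have hsum : ∀ (T : Finset G) (u : G → G), (∀ b ∈ T, P (u b)) → P (∑ b ∈ T, u b) :=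
    fun T u h => Finset.sum_induction u P hPadd hP0 h
  set d : G → ℤ := fun b => (f b : ℤ) - (g b : ℤ) with hd
  have hsplit : f.sum (fun b n => n • b) - g.sum (fun b n => n • b) = ∑ b ∈ S, d b • b := by
    rw [Finsupp.sum_of_support_subset f Finset.subset_union_left _ (by intros; simp),
        Finsupp.sum_of_support_subset g Finset.subset_union_right _ (by intros; simp),
        ← Finset.sum_sub_distrib]
    refine Finset.sum_congr rfl fun b _ => ?_
    simp only [hd]
    rw [sub_zsmul, natCast_zsmul, natCast_zsmul, sub_eq_add_neg]
  have hhiS : ∑ b ∈ S.filter (fun b => a < b), d b • b = 0 :=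
    Finset.sum_eq_zero fun b hb => by
      simp only [hd]
      rw [hhi b (Finset.mem_filter.1 hb).2]
      simp
  have haS : a ∈ S.filter (fun b => ¬ a < b) := by
    have haf : a ∈ f.support := Finsupp.mem_support_iff.2 (by omega)
    exact Finset.mem_filter.2 ⟨Finset.mem_union_left _ haf, lt_irrefl a⟩
  set T : Finset G := S.filter (fun b => ¬ a < b) with hT
  have hTsum : ∑ b ∈ S, d b • b = d a • a + ∑ b ∈ T.erase a, d b • b := by
    rw [← Finset.sum_filter_add_sum_filter_not S (fun b => a < b), hhiS, zero_add,
        ← Finset.add_sum_erase _ _ haS]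
  have hrest : -a < ∑ b ∈ T.erase a, d b • b := by
    have hPneg : P (-(∑ b ∈ T.erase a, d b • b)) := by
      rw [← Finset.sum_neg_distrib]
      refine hsum _ _ fun b hb => ?_
      have hbT : b ∈ T := Finset.mem_of_mem_erase hb
      have hbS : b ∈ S := Finset.mem_of_mem_filter _ hbT
      have hbA : b ∈ A := hSA b hbS
      have hbne : b ≠ a := Finset.ne_of_mem_erase hb
      have hble : b < a := lt_of_le_of_ne (not_lt.1 (Finset.mem_filter.1 hbT).2) hbne
      rw [← neg_zsmul]
      exact hPzsmul b hbA hble _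
    have h1 := hPneg 1
    rw [one_nsmul] at h1
    exact neg_lt.1 h1
  have hda : (1 : ℤ) ≤ d a := by rw [hd]; simp only []; omega
  have hfinal : 0 < ∑ b ∈ S, d b • b := by
    rw [hTsum]
    have h1 : a ≤ d a • a := by
      calc a = (1 : ℤ) • a := (one_zsmul a).symm
        _ ≤ d a • a := zsmul_le_zsmul_left ha0.le hda
    calc (0 : G) = a + -a := (add_neg_cancel a).symm
      _ < a + ∑ b ∈ T.erase a, d b • b := add_lt_add_right hrest a
      _ ≤ d a • a + ∑ b ∈ T.erase a, d b • b := add_le_add_left h1 _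
  rw [← hsplit] at hfinal
  exact sub_pos.1 hfinal

end SumSide


/-- Let `G` be a linearly ordered abelian group and `A` a set of positive
elements of `G`, well-ordered by the group order with order type `α`, all of whose elements
lie in pairwise distinct archimedean classes. Then the additive subsemigroup generated by
`A` (the set of finite sums of one or more elements of `A`) is well-ordered of order type
at most `ω^α`. -/
theorem sums_of_distinct_archimedean_classes {G : Type*} [AddCommGroup G] [LinearOrder G] [IsOrderedAddMonoid G]
    (A : Set G) (hApos : ∀ a ∈ A, 0 < a) (α : Ordinal)
    (hwo : IsWellOrder A (fun a b => (a : G) < (b : G)))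
    (htype : @Ordinal.type _ _ hwo = α)
    (hdist : ∀ a ∈ A, ∀ b ∈ A, ArchEquiv a b → a = b) :
    ∃ hwo' : IsWellOrder (AddSubsemigroup.closure A) (fun a b => (a : G) < (b : G)),
      @Ordinal.type _ _ hwo' ≤ Ordinal.omega0 ^ α := by
  classical
  haveI : IsWellOrder A (fun a b => (a : G) < (b : G)) := hwo
  have hrep : ∀ x : AddSubsemigroup.closure A,
      ∃ f : G →₀ ℕ, ↑f.support ⊆ A ∧ f.sum (fun b n => n • b) = (x : G) :=
    fun x => exists_repr x.2
  choose F hFsupp hFsum using hrep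
  set Φ : AddSubsemigroup.closure A → Ordinal :=
    fun x => oList A (sortDescG (F x).support) (F x) with hΦ
  have hmemA : ∀ (x : AddSubsemigroup.closure A) b, b ∈ sortDescG (F x).support → b ∈ A :=
    fun x b hb => hFsupp x (mem_sortDescG.1 hb)
  have hbound : ∀ x, Φ x < Ordinal.omega0 ^ α := by
    intro x
    refine oList_lt A (sortDescG_sorted _) (hmemA x) fun b hb => ?_
    rw [← htype]
    exact aidx_lt_type A (hmemA x b hb)
  have hmono : ∀ x y : AddSubsemigroup.closure A, (x : G) < (y : G) → Φ x < Φ y := by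
    intro x y hxy
    set f := F x with hfd
    set g := F y with hgd
    have hfg : f ≠ g := by
      intro h
      apply ne_of_lt hxy
      rw [← hFsum x, ← hFsum y, ← hfd, ← hgd, h]
    set D : Finset G := (f.support ∪ g.support).filter (fun b => f b ≠ g b) with hD
    have hDne : D.Nonempty := by
      obtain ⟨b, hb⟩ : ∃ b, f b ≠ g b := by
        by_contra hcon; push_neg at hcon; exact hfg (Finsupp.ext hcon)
      refine ⟨b, Finset.mem_filter.2 ⟨?_, hb⟩⟩
      rcases eq_or_ne (f b) 0 with h0 | h0
      · exact Finset.mem_union_right _ (Finsupp.mem_support_iff.2 (fun h => hb (by rw [h0, h])))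
      · exact Finset.mem_union_left _ (Finsupp.mem_support_iff.2 h0)
    set a := D.max' hDne with haa
    have haD : a ∈ D := D.max'_mem hDne
    have haU : a ∈ f.support ∪ g.support := (Finset.mem_filter.1 haD).1
    have hane : f a ≠ g a := (Finset.mem_filter.1 haD).2
    have haA : a ∈ A := by
      rcases Finset.mem_union.1 haU with h | h
      · exact hFsupp x h
      · exact hFsupp y h
    have hhi : ∀ b, a < b → f b = g b := by
      intro b hab
      by_contra hne
      have hbU : b ∈ f.support ∪ g.support := by
        rcases eq_or_ne (f b) 0 with h0 | h0
        · exact Finset.mem_union_right _ (Finsupp.mem_support_iff.2 (fun h => hne (by rw [h0, h])))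
        · exact Finset.mem_union_left _ (Finsupp.mem_support_iff.2 h0)
      have hba : b ≤ a := D.le_max' b (Finset.mem_filter.2 ⟨hbU, hne⟩)
      exact absurd hab (not_lt.2 hba)
    rcases lt_or_gt_of_ne hane with hlt | hgt
    · have e1 : Φ x = oList A (sortDescG (f.support ∪ g.support)) f := by
        refine oList_congr A _ (sortDescG_sorted _) (sortDescG_sorted _) fun b hb => ?_
        rw [mem_sortDescG, mem_sortDescG]
        exact ⟨fun h => Finset.mem_union_left _ h, fun _ => Finsupp.mem_support_iff.2 hb⟩
      have e2 : Φ y = oList A (sortDescG (f.support ∪ g.support)) g := by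
        refine oList_congr A _ (sortDescG_sorted _) (sortDescG_sorted _) fun b hb => ?_
        rw [mem_sortDescG, mem_sortDescG]
        exact ⟨fun h => Finset.mem_union_right _ h, fun _ => Finsupp.mem_support_iff.2 hb⟩
      rw [e1, e2]
      refine oList_lt_oList A (sortDescG_sorted _) (fun b hb => ?_)
        (mem_sortDescG.2 haU) (fun b _ h => hhi b h) hlt
      rcases Finset.mem_union.1 (mem_sortDescG.1 hb) with h | h
      · exact hFsupp x h
      · exact hFsupp y h
    · have hsl := sum_lt_sum hdist hApos f g (hFsupp x) (hFsupp y) haA hhi hgt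
      rw [hfd, hgd, hFsum x, hFsum y] at hsl
      exact absurd hxy (not_lt.2 hsl.le)
  set Ψ : AddSubsemigroup.closure A → (Ordinal.omega0 ^ α).ToType :=
    fun x => Ordinal.ToType.mk ⟨Φ x, hbound x⟩ with hΨd
  have hΨlt : ∀ x y : AddSubsemigroup.closure A, (x : G) < (y : G) → Ψ x < Ψ y := by
    intro x y h
    exact (OrderIso.lt_iff_lt _).2 (Subtype.mk_lt_mk.2 (hmono x y h))
  have hmap : ∀ x y : AddSubsemigroup.closure A, Ψ x < Ψ y ↔ (x : G) < (y : G) := by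
    intro x y
    constructor
    · intro h
      rcases lt_trichotomy (x : G) (y : G) with h' | h' | h'
      · exact h'
      · exfalso
        have hxy : x = y := Subtype.ext h'
        rw [hxy] at h
        exact lt_irrefl _ h
      · exact absurd (hΨlt y x h') (asymm h)
    · exact hΨlt x y
  let emb : RelEmbedding (fun (a b : AddSubsemigroup.closure A) => (a : G) < (b : G))
      ((· < ·) : (Ordinal.omega0 ^ α).ToType → (Ordinal.omega0 ^ α).ToType → Prop) :=
    ⟨⟨Ψ, by
      intro x y h
      by_contra hne
      have hne' : (x : G) ≠ (y : G) := fun hh => hne (Subtype.ext hh)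
      rcases hne'.lt_or_gt with h' | h'
      · exact absurd h (ne_of_lt (hΨlt x y h'))
      · exact absurd h.symm (ne_of_lt (hΨlt y x h'))⟩, hmap _ _⟩
  haveI hβwo : IsWellOrder (Ordinal.omega0 ^ α).ToType (· < ·) := isWellOrder_lt
  haveI hwo' := RelEmbedding.isWellOrder emb
  refine ⟨hwo', ?_⟩
  have h1 : @Ordinal.type _ _ hwo' ≤
      Ordinal.type ((· < ·) : (Ordinal.omega0 ^ α).ToType → (Ordinal.omega0 ^ α).ToType → Prop) :=
    Ordinal.type_le_iff'.2 ⟨emb⟩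
  rwa [Ordinal.type_toType] at h1
end
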